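/- arXiv:2007.03984 — 3 statements merged into one kernel-verified Lean document; each statement's English description precedes it below -/
import Mathlib

section
/- Let (→AB, →CD) be a proper pair of oriented segments in 𝒢_{m,n} and let f = f_{→AB} ∧ f_{→CD} (i.e., M₁(f) = M₁(f_{→AB}) ∩ M₁(f_{→CD})). If f has no true points on the boundary of the grid, i.e. M₁(f) ⊆ {1,…,m−2}×{1,…,n−2}, then the Euclidean distance from A to the line through C and D and the Euclidean distance from B to the line through C and D are each at most 1. -/
open scoped Real

noncomputable section

/-- Integer 2×2 determinant of two planar vectors. -/
def detZ (v w : ℤ × ℤ) : ℤ := v.1 * w.2 - v.2 * w.1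

/-- Real 2×2 determinant of two planar vectors. -/
def detR (v w : ℝ × ℝ) : ℝ := v.1 * w.2 - v.2 * w.1

/-- The grid 𝒢_{m,n} = {0,…,m−1} × {0,…,n−1} of integer points. -/
def Grid (m n : ℕ) : Set (ℤ × ℤ) :=
  {p | 0 ≤ p.1 ∧ p.1 < (m : ℤ) ∧ 0 ≤ p.2 ∧ p.2 < (n : ℤ)}

/-- The boundary B(𝒢_{m,n}) of the grid. -/
def GridBoundary (m n : ℕ) : Set (ℤ × ℤ) :=
  {p | p ∈ Grid m n ∧ (p.1 = 0 ∨ p.1 = (m : ℤ) - 1 ∨ p.2 = 0 ∨ p.2 = (n : ℤ) - 1)}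

/-- The segment AB is prime: A, B are the only integer points on it
(equivalently, the coordinates of B − A are coprime). -/
def PrimeSeg (A B : ℤ × ℤ) : Prop := Int.gcd (B.1 - A.1) (B.2 - A.2) = 1

/-- f_{→AB}(X) = 1 : X on the line through A, B and strictly closer to A than to B,
or the triangle →ABX is counterclockwise. -/
def SegTrue (A B X : ℤ × ℤ) : Prop :=
  (detZ (B - A) (X - A) = 0 ∧
    (X.1 - A.1) ^ 2 + (X.2 - A.2) ^ 2 < (X.1 - B.1) ^ 2 + (X.2 - B.2) ^ 2) ∨
  0 < detZ (B - A) (X - A)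

/-- The pair of oriented segments (→AB, →CD) with endpoints in 𝒢_{m,n} is proper. -/
def ProperPair (m n : ℕ) (A B C D : ℤ × ℤ) : Prop :=
  A ∈ Grid m n ∧ B ∈ Grid m n ∧ C ∈ Grid m n ∧ D ∈ Grid m n ∧
  PrimeSeg A B ∧ PrimeSeg C D ∧
  SegTrue C D A ∧ SegTrue C D B ∧ SegTrue A B C ∧ SegTrue A B D

/-- A, B, C, D (in this cyclic order) are the vertices of a (strictly) convex
quadrilateral with sides AB, BC, CD, DA. -/
def QuadConv (A B C D : ℤ × ℤ) : Prop :=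
  (0 < detZ (B - A) (C - B) ∧ 0 < detZ (C - B) (D - C) ∧
    0 < detZ (D - C) (A - D) ∧ 0 < detZ (A - D) (B - A)) ∨
  (detZ (B - A) (C - B) < 0 ∧ detZ (C - B) (D - C) < 0 ∧
    detZ (D - C) (A - D) < 0 ∧ detZ (A - D) (B - A) < 0)

/-- The segments AB and CD are in convex position: A, B, C, D are the vertices of a
convex quadrilateral in which AB and CD are opposite sides. -/
def ConvexPos (A B C D : ℤ × ℤ) : Prop := QuadConv A B C D ∨ QuadConv A B D C

/-- Real-plane version of `QuadConv`. -/
def QuadConvR (A B C D : ℝ × ℝ) : Prop :=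
  (0 < detR (B - A) (C - B) ∧ 0 < detR (C - B) (D - C) ∧
    0 < detR (D - C) (A - D) ∧ 0 < detR (A - D) (B - A)) ∨
  (detR (B - A) (C - B) < 0 ∧ detR (C - B) (D - C) < 0 ∧
    detR (D - C) (A - D) < 0 ∧ detR (A - D) (B - A) < 0)

/-- Real-plane version of `ConvexPos`. -/
def ConvexPosR (A B C D : ℝ × ℝ) : Prop := QuadConvR A B C D ∨ QuadConvR A B D C

/-- Embedding of integer points into the real plane. -/
def ptR (p : ℤ × ℤ) : ℝ × ℝ := ((p.1 : ℝ), (p.2 : ℝ))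

/-- Embedding of integer points into the Euclidean plane. -/
def ptE (p : ℤ × ℤ) : EuclideanSpace ℝ (Fin 2) := WithLp.toLp 2 ![(p.1 : ℝ), (p.2 : ℝ)]

/-- A threshold function on 𝒢_{m,n}, identified with its set T of true points:
the convex hulls of true and false points are disjoint. -/
def IsThresholdSet (m n : ℕ) (T : Set (ℤ × ℤ)) : Prop :=
  T ⊆ Grid m n ∧
  Disjoint (convexHull ℝ (ptR '' T)) (convexHull ℝ (ptR '' (Grid m n \ T)))

/-- A 2-threshold function on 𝒢_{m,n}, identified with its set of true points. -/
def IsTwoThresholdSet (m n : ℕ) (T : Set (ℤ × ℤ)) : Prop :=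
  ∃ T₁ T₂ : Set (ℤ × ℤ), IsThresholdSet m n T₁ ∧ IsThresholdSet m n T₂ ∧ T = T₁ ∩ T₂

/-- t₂(m,n): the number of 2-threshold functions on 𝒢_{m,n}. -/
def t2 (m n : ℕ) : ℕ := {T : Set (ℤ × ℤ) | IsTwoThresholdSet m n T}.ncard

/-- The set of proper (unordered) pairs of oriented segments in 𝒢_{m,n}. -/
def ProperPairs (m n : ℕ) : Set (Sym2 ((ℤ × ℤ) × (ℤ × ℤ))) :=
  {z | ∃ A B C D : ℤ × ℤ, z = s((A, B), (C, D)) ∧ ProperPair m n A B C D}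

/-- q(m,n): the number of proper pairs of oriented segments in 𝒢_{m,n}. -/
def qcount (m n : ℕ) : ℕ := (ProperPairs m n).ncard

/-- The set of unordered pairs of (non-oriented) prime segments with endpoints in
𝒢_{m,n} that are in convex position. -/
def ConvexPrimePairs (m n : ℕ) : Set (Sym2 (Sym2 (ℤ × ℤ))) :=
  {z | ∃ A B C D : ℤ × ℤ, z = s(s(A, B), s(C, D)) ∧
    A ∈ Grid m n ∧ B ∈ Grid m n ∧ C ∈ Grid m n ∧ D ∈ Grid m n ∧
    PrimeSeg A B ∧ PrimeSeg C D ∧ ConvexPos A B C D}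

/-- p(m,n): the number of unordered pairs of prime segments in convex position with
endpoints in 𝒢_{m,n}. -/
def pcount (m n : ℕ) : ℕ := (ConvexPrimePairs m n).ncard

/-- The axis-aligned bounding box of {A,B,C,D} is the rectangle [0,u]×[0,v]. -/
def InBBox (u v : ℕ) (A B C D : ℤ × ℤ) : Prop :=
  min (min A.1 B.1) (min C.1 D.1) = 0 ∧
  max (max A.1 B.1) (max C.1 D.1) = (u : ℤ) ∧
  min (min A.2 B.2) (min C.2 D.2) = 0 ∧
  max (max A.2 B.2) (max C.2 D.2) = (v : ℤ)

/-- The pair {AB, CD} of prime segments is in convex position with bounding box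
ℛ_{u,v} = [0,u]×[0,v]. -/
def ZPair (u v : ℕ) (A B C D : ℤ × ℤ) : Prop :=
  PrimeSeg A B ∧ PrimeSeg C D ∧ ConvexPos A B C D ∧ InBBox u v A B C D

/-- Z(u,v): pairs of prime segments in convex position with bounding box ℛ_{u,v}. -/
def Zset (u v : ℕ) : Set (Sym2 (Sym2 (ℤ × ℤ))) :=
  {z | ∃ A B C D : ℤ × ℤ, z = s(s(A, B), s(C, D)) ∧ ZPair u v A B C D}

/-- P is a corner (vertex) of the rectangle ℛ_{u,v} = [0,u]×[0,v]. -/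
def RectCorner (u v : ℕ) (P : ℤ × ℤ) : Prop :=
  (P.1 = 0 ∨ P.1 = (u : ℤ)) ∧ (P.2 = 0 ∨ P.2 = (v : ℤ))

/-- The number of points among A, B, C, D that are corners of ℛ_{u,v}. -/
def cornerCount (u v : ℕ) (A B C D : ℤ × ℤ) : ℕ :=
  {P : ℤ × ℤ | P ∈ ({A, B, C, D} : Set (ℤ × ℤ)) ∧ RectCorner u v P}.ncard

/-- Z_i(u,v): the pairs in Z(u,v) with exactly i endpoints at corners of ℛ_{u,v}. -/
def Zi (i u v : ℕ) : Set (Sym2 (Sym2 (ℤ × ℤ))) :=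
  {z | ∃ A B C D : ℤ × ℤ, z = s(s(A, B), s(C, D)) ∧ ZPair u v A B C D ∧
    cornerCount u v A B C D = i}

/-- Z₂ᵃ(u,v): exactly two corner endpoints, lying at adjacent corners of ℛ_{u,v}. -/
def Z2a (u v : ℕ) : Set (Sym2 (Sym2 (ℤ × ℤ))) :=
  {z | ∃ A B C D : ℤ × ℤ, z = s(s(A, B), s(C, D)) ∧ ZPair u v A B C D ∧
    cornerCount u v A B C D = 2 ∧
    ∃ X Y : ℤ × ℤ, X ∈ ({A, B, C, D} : Set (ℤ × ℤ)) ∧ Y ∈ ({A, B, C, D} : Set (ℤ × ℤ)) ∧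
      X ≠ Y ∧ RectCorner u v X ∧ RectCorner u v Y ∧ (X.1 = Y.1 ∨ X.2 = Y.2)}

/-- Z₂ᵇ(u,v): exactly two corner endpoints, at opposite corners of ℛ_{u,v},
both on the same segment of the pair. -/
def Z2b (u v : ℕ) : Set (Sym2 (Sym2 (ℤ × ℤ))) :=
  {z | ∃ A B C D : ℤ × ℤ, z = s(s(A, B), s(C, D)) ∧ ZPair u v A B C D ∧
    cornerCount u v A B C D = 2 ∧
    RectCorner u v A ∧ RectCorner u v B ∧ A.1 ≠ B.1 ∧ A.2 ≠ B.2}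

/-- Z₂ᶜ(u,v): exactly two corner endpoints, at opposite corners of ℛ_{u,v},
belonging to different segments of the pair. -/
def Z2c (u v : ℕ) : Set (Sym2 (Sym2 (ℤ × ℤ))) :=
  {z | ∃ A B C D : ℤ × ℤ, z = s(s(A, B), s(C, D)) ∧ ZPair u v A B C D ∧
    cornerCount u v A B C D = 2 ∧
    RectCorner u v A ∧ RectCorner u v C ∧ A.1 ≠ C.1 ∧ A.2 ≠ C.2}

/-- Z₁ᵃ(u,v): exactly one corner endpoint A; the other endpoint B of the segment
containing A is an interior point of ℛ_{u,v}. -/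
def Z1a (u v : ℕ) : Set (Sym2 (Sym2 (ℤ × ℤ))) :=
  {z | ∃ A B C D : ℤ × ℤ, z = s(s(A, B), s(C, D)) ∧ ZPair u v A B C D ∧
    cornerCount u v A B C D = 1 ∧ RectCorner u v A ∧
    0 < B.1 ∧ B.1 < (u : ℤ) ∧ 0 < B.2 ∧ B.2 < (v : ℤ)}

/-- Z₁ᵇ(u,v): exactly one corner endpoint A; the other endpoint B of the segment
containing A lies on the boundary of ℛ_{u,v}. -/
def Z1b (u v : ℕ) : Set (Sym2 (Sym2 (ℤ × ℤ))) :=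
  {z | ∃ A B C D : ℤ × ℤ, z = s(s(A, B), s(C, D)) ∧ ZPair u v A B C D ∧
    cornerCount u v A B C D = 1 ∧ RectCorner u v A ∧
    (B.1 = 0 ∨ B.1 = (u : ℤ) ∨ B.2 = 0 ∨ B.2 = (v : ℤ))}

end

-- auxiliary
/-- value of the halfplane functional -/
def dl (U V X : ℤ × ℤ) : ℤ := detZ (V - U) (X - U)

lemma dl_apply (U V X : ℤ × ℤ) :
    dl U V X = (V.1 - U.1) * (X.2 - U.2) - (V.2 - U.2) * (X.1 - U.1) := rfl

lemma segTrue_of_strict {U V X : ℤ × ℤ} (h : 1 ≤ dl U V X) : SegTrue U V X :=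
  Or.inr (by simp only [dl] at h; omega)

lemma grid_mem {m n : ℕ} {X : ℤ × ℤ} :
    X ∈ Grid m n ↔ 0 ≤ X.1 ∧ X.1 < (m : ℤ) ∧ 0 ≤ X.2 ∧ X.2 < (n : ℤ) := Iff.rfl

section March

variable (m n : ℕ) (A B C D : ℤ × ℤ)

/-- key algebraic identity (anchored at Z with dl A B Z = 0):
 p * l1 X = r * (l2 X - l2 Z) + δ * (X.1 - Z.1) -/
lemma idtyX (Z : ℤ × ℤ) (hZ0 : dl A B Z = 0) (X : ℤ × ℤ) :
    (D.1 - C.1) * dl A B X =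
      (B.1 - A.1) * (dl C D X - dl C D Z) + detZ (B - A) (D - C) * (X.1 - Z.1) := by
  have h := hZ0
  simp only [dl, detZ] at *
  simp only [Prod.fst_sub, Prod.snd_sub] at *
  linear_combination (D.1 - C.1) * h

lemma idtyY (Z : ℤ × ℤ) (hZ0 : dl A B Z = 0) (X : ℤ × ℤ) :
    (D.2 - C.2) * dl A B X =
      (B.2 - A.2) * (dl C D X - dl C D Z) + detZ (B - A) (D - C) * (X.2 - Z.2) := by
  have h := hZ0
  simp only [dl, detZ] at *
  simp only [Prod.fst_sub, Prod.snd_sub] at *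
  linear_combination (D.2 - C.2) * h

end March

section MLcore

set_option maxHeartbeats 1000000 in
/-- Generic windowed march with escape in the first coordinate. -/
lemma MLcore (M N : ℤ) (G Tr : ℤ × ℤ → Prop) (L1 L2 : ℤ × ℤ → ℤ)
    (r p q δ Zx h0 H ε sp : ℤ)
    (hshift2 : ∀ (X : ℤ × ℤ) (a b : ℤ), L2 (X.1 + a, X.2 + b) = L2 X + (p * b - q * a))
    (hid : ∀ X : ℤ × ℤ, p * L1 X = r * (L2 X - h0) + δ * (X.1 - Zx))
    (hbound : ∀ X, Tr X → G X → 1 ≤ X.1 ∧ X.1 ≤ M - 2 ∧ 1 ≤ X.2 ∧ X.2 ≤ N - 2)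
    (hGmem : ∀ X : ℤ × ℤ, 0 ≤ X.1 → X.1 < M → 0 ≤ X.2 → X.2 < N → G X)
    (hGout : ∀ X : ℤ × ℤ, G X → 0 ≤ X.1 ∧ X.1 < M ∧ 0 ≤ X.2 ∧ X.2 < N)
    (hTr : ∀ X, 1 ≤ L1 X → 1 ≤ L2 X → Tr X)
    (hsp : sp = 1 ∨ sp = -1) (hε : ε = 1 ∨ ε = -1)
    (hp : 1 ≤ sp * p) (hq1 : q ≤ sp * p) (hq2 : -(sp * p) ≤ q)
    (hrp : sp * r ≤ 0)
    (X0 : ℤ × ℤ)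
    (halign : 0 ≤ sp * δ * (X0.1 - Zx))
    (hdir : 0 ≤ sp * δ * ε)
    (hgrow : δ ≠ 0 ∨ (sp * r ≤ -1 ∧ H ≤ h0 - 1))
    (hH : sp * p ≤ H) (hHh0 : H ≤ h0)
    (hX0g : G X0) (hX0t : Tr X0)
    (hX0l : 1 ≤ L2 X0) (hX0h : L2 X0 ≤ H) : False := by
  have hεb1 : -1 ≤ ε := by rcases hε with h | h <;> omega
  have hεb2 : ε ≤ 1 := by rcases hε with h | h <;> omega
  have hq1' : q * ε ≤ sp * p := by
    rcases hε with h | h <;> subst h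
    · simpa using hq1
    · have : q * (-1 : ℤ) = -q := by ring
      rw [this]; linarith
  have hq2' : -(sp * p) ≤ q * ε := by
    rcases hε with h | h <;> subst h
    · simpa using hq2
    · have : q * (-1 : ℤ) = -q := by ring
      rw [this]; linarith
  have main : ∀ k : ℕ, ∃ X : ℤ × ℤ, G X ∧ Tr X ∧
      1 ≤ L2 X ∧ L2 X ≤ H ∧ 0 ≤ sp * δ * (X.1 - Zx) ∧
      X.1 = X0.1 + (k : ℤ) * ε := by
    intro k
    induction k with
    | zero => exact ⟨X0, hX0g, hX0t, hX0l, hX0h, halign, by ring⟩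
    | succ k ih =>
      obtain ⟨X, hXg, hXt, hXl, hXh, hXa, hXx⟩ := ih
      obtain ⟨hx1, hx2, hy1, hy2⟩ := hbound X hXt hXg
      have hτex : ∃ τ : ℤ, -1 ≤ τ ∧ τ ≤ 1 ∧
          1 ≤ L2 X + (p * τ - q * ε) ∧ L2 X + (p * τ - q * ε) ≤ H := by
        by_cases h1 : 1 ≤ L2 X - q * ε ∧ L2 X - q * ε ≤ H
        · exact ⟨0, by norm_num, by norm_num, by linarith [h1.1], by linarith [h1.2]⟩
        · by_cases h2 : L2 X - q * ε ≤ 0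
          · refine ⟨sp, by rcases hsp with h | h <;> omega,
              by rcases hsp with h | h <;> omega, ?_, ?_⟩
            · have hps : p * sp = sp * p := by ring
              rw [hps]; linarith
            · have hps : p * sp = sp * p := by ring
              rw [hps]; linarith
          · push_neg at h2
            have h3 : H + 1 ≤ L2 X - q * ε := by
              by_contra hcon
              push_neg at hcon
              exact h1 ⟨by omega, by omega⟩
            refine ⟨-sp, by rcases hsp with h | h <;> omega,
              by rcases hsp with h | h <;> omega, ?_, ?_⟩
            · have hps : p * (-sp) = -(sp * p) := by ring
              rw [hps]; linarith
            · have hps : p * (-sp) = -(sp * p) := by ring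
              rw [hps]; linarith
      obtain ⟨τ, hτ1, hτ2, hw1, hw2⟩ := hτex
      have hCD : L2 (X.1 + ε, X.2 + τ) = L2 X + (p * τ - q * ε) := hshift2 X ε τ
      have hl2 : 1 ≤ L2 (X.1 + ε, X.2 + τ) := by rw [hCD]; linarith
      have hl2' : L2 (X.1 + ε, X.2 + τ) ≤ H := by rw [hCD]; linarith
      have halign' : 0 ≤ sp * δ * ((X.1 + ε) - Zx) := by
        have heq : sp * δ * ((X.1 + ε) - Zx) = sp * δ * (X.1 - Zx) + sp * δ * ε := by ring
        rw [heq]; linarith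
      have hid1 := hid (X.1 + ε, X.2 + τ)
      have hid2 : (sp * p) * L1 (X.1 + ε, X.2 + τ) =
          (sp * r) * (L2 (X.1 + ε, X.2 + τ) - h0) + sp * δ * ((X.1 + ε) - Zx) := by
        have h1 : ((X.1 + ε, X.2 + τ) : ℤ × ℤ).1 - Zx = (X.1 + ε) - Zx := rfl
        rw [h1] at hid1
        linear_combination sp * hid1
      have hterm1 : 0 ≤ (sp * r) * (L2 (X.1 + ε, X.2 + τ) - h0) := by
        have hd : L2 (X.1 + ε, X.2 + τ) - h0 ≤ 0 := by linarith
        nlinarith [mul_nonneg (neg_nonneg.2 hrp) (neg_nonneg.2 hd)]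
      have hrhs : 1 ≤ (sp * p) * L1 (X.1 + ε, X.2 + τ) := by
        rcases hgrow with hδne | ⟨hr1, hH1⟩
        · have h1 : 1 ≤ sp * δ * ε := by
            rcases hsp with h | h <;> rcases hε with h' | h' <;>
              subst h <;> subst h' <;> simp at hdir ⊢ <;> omega
          have h2 : sp * δ * ((X.1 + ε) - Zx) =
              sp * δ * (X.1 - Zx) + sp * δ * ε := by ring
          rw [hid2, h2]; linarith
        · have hd : L2 (X.1 + ε, X.2 + τ) - h0 ≤ -1 := by linarith
          have h4 : (1 : ℤ) * 1 ≤ (-(sp * r)) * (-(L2 (X.1 + ε, X.2 + τ) - h0)) :=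
            mul_le_mul (by linarith) (by linarith) (by norm_num) (by linarith)
          rw [hid2]; nlinarith [h4]
      have hl1 : 1 ≤ L1 (X.1 + ε, X.2 + τ) := by
        by_contra hcon
        push_neg at hcon
        have h5 : L1 (X.1 + ε, X.2 + τ) ≤ 0 := by omega
        have h6 : (sp * p) * L1 (X.1 + ε, X.2 + τ) ≤ 0 :=
          mul_nonpos_of_nonneg_of_nonpos (by linarith) h5
        linarith
      have hgrid : G (X.1 + ε, X.2 + τ) := by
        apply hGmem <;> simp only <;> linarith
      refine ⟨(X.1 + ε, X.2 + τ), hgrid, hTr _ hl1 hl2, hl2, hl2', halign', ?_⟩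
      show X.1 + ε = X0.1 + ((k : ℤ) + 1) * ε
      rw [hXx]; ring
  have hM : 1 ≤ M := by
    obtain ⟨h1, h2, -, -⟩ := hGout X0 hX0g
    omega
  obtain ⟨X, hXg, -, -, -, -, hXx⟩ := main M.toNat
  obtain ⟨ha1, ha2, -, -⟩ := hGout X hXg
  obtain ⟨hb1, hb2, -, -⟩ := hGout X0 hX0g
  have hMt : ((M.toNat : ℤ)) = M := Int.toNat_of_nonneg (by omega)
  rw [hMt] at hXx
  rcases hε with h | h <;> subst h <;> rw [hXx] at ha1 ha2 <;> omega

/-- Generic straight march with escape in the first coordinate. -/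
lemma MLScore (M N : ℤ) (G Tr : ℤ × ℤ → Prop) (L1 L2 : ℤ × ℤ → ℤ)
    (d1 d2 ε u2 : ℤ)
    (hshift : ∀ X : ℤ × ℤ, L1 (X.1 + ε, X.2 + u2) = L1 X + d1 ∧
      L2 (X.1 + ε, X.2 + u2) = L2 X + d2)
    (hbound : ∀ X, Tr X → G X → 1 ≤ X.1 ∧ X.1 ≤ M - 2 ∧ 1 ≤ X.2 ∧ X.2 ≤ N - 2)
    (hGmem : ∀ X : ℤ × ℤ, 0 ≤ X.1 → X.1 < M → 0 ≤ X.2 → X.2 < N → G X)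
    (hGout : ∀ X : ℤ × ℤ, G X → 0 ≤ X.1 ∧ X.1 < M ∧ 0 ≤ X.2 ∧ X.2 < N)
    (hTr : ∀ X, 1 ≤ L1 X → 1 ≤ L2 X → Tr X)
    (hε : ε = 1 ∨ ε = -1) (hu2 : -1 ≤ u2 ∧ u2 ≤ 1)
    (hd1 : 0 ≤ d1) (hd2 : 0 ≤ d2)
    (X0 : ℤ × ℤ) (hX0g : G X0)
    (hX0a : 1 ≤ L1 X0) (hX0b : 1 ≤ L2 X0) : False := by
  have main : ∀ k : ℕ, ∃ X : ℤ × ℤ, G X ∧ 1 ≤ L1 X ∧ 1 ≤ L2 X ∧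
      X.1 = X0.1 + (k : ℤ) * ε := by
    intro k
    induction k with
    | zero => exact ⟨X0, hX0g, hX0a, hX0b, by ring⟩
    | succ k ih =>
      obtain ⟨X, hXg, hXa, hXb, hXx⟩ := ih
      obtain ⟨hx1, hx2, hy1, hy2⟩ := hbound X (hTr X hXa hXb) hXg
      obtain ⟨hs1, hs2⟩ := hshift X
      have hεb1 : -1 ≤ ε := by rcases hε with h | h <;> omega
      have hεb2 : ε ≤ 1 := by rcases hε with h | h <;> omega
      refine ⟨(X.1 + ε, X.2 + u2), ?_, by rw [hs1]; linarith, by rw [hs2]; linarith, ?_⟩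
      · apply hGmem <;> simp only <;> linarith [hu2.1, hu2.2]
      · show X.1 + ε = X0.1 + ((k : ℤ) + 1) * ε
        rw [hXx]; ring
  have hM : 1 ≤ M := by
    obtain ⟨h1, h2, -, -⟩ := hGout X0 hX0g
    omega
  obtain ⟨X, hXg, -, -, hXx⟩ := main M.toNat
  obtain ⟨ha1, ha2, -, -⟩ := hGout X hXg
  obtain ⟨hb1, hb2, -, -⟩ := hGout X0 hX0g
  have hMt : ((M.toNat : ℤ)) = M := Int.toNat_of_nonneg (by omega)
  rw [hMt] at hXx
  rcases hε with h | h <;> subst h <;> rw [hXx] at ha1 ha2 <;> omega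

end MLcore

section Wrappers
variable {m n : ℕ} {A B C D : ℤ × ℤ}

/-- x-direction windowed march on the actual grid. -/
lemma ML2x
    (hbnd : ∀ X : ℤ × ℤ, X ∈ Grid m n → SegTrue A B X → SegTrue C D X →
      1 ≤ X.1 ∧ X.1 ≤ (m : ℤ) - 2 ∧ 1 ≤ X.2 ∧ X.2 ≤ (n : ℤ) - 2)
    (Z X0 : ℤ × ℤ) (H ε sp : ℤ)
    (hsp : sp = 1 ∨ sp = -1) (hε : ε = 1 ∨ ε = -1)
    (hp : 1 ≤ sp * (D.1 - C.1))
    (hq1 : D.2 - C.2 ≤ sp * (D.1 - C.1)) (hq2 : -(sp * (D.1 - C.1)) ≤ D.2 - C.2)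
    (hrp : sp * (B.1 - A.1) ≤ 0)
    (hZ0 : dl A B Z = 0)
    (halign : 0 ≤ sp * detZ (B - A) (D - C) * (X0.1 - Z.1))
    (hdir : 0 ≤ sp * detZ (B - A) (D - C) * ε)
    (hgrow : detZ (B - A) (D - C) ≠ 0 ∨ (sp * (B.1 - A.1) ≤ -1 ∧ H ≤ dl C D Z - 1))
    (hH : sp * (D.1 - C.1) ≤ H) (hHh0 : H ≤ dl C D Z)
    (hX0g : X0 ∈ Grid m n) (hX0t1 : SegTrue A B X0) (hX0t2 : SegTrue C D X0)
    (hX0l : 1 ≤ dl C D X0) (hX0h : dl C D X0 ≤ H) : False := by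
  refine MLcore (m : ℤ) (n : ℤ) (fun X => X ∈ Grid m n)
    (fun X => SegTrue A B X ∧ SegTrue C D X) (dl A B) (dl C D)
    (B.1 - A.1) (D.1 - C.1) (D.2 - C.2) (detZ (B - A) (D - C)) Z.1 (dl C D Z) H ε sp
    ?_ ?_ ?_ ?_ ?_ ?_ hsp hε hp hq1 hq2 hrp X0 halign hdir hgrow hH hHh0 hX0g
    ⟨hX0t1, hX0t2⟩ hX0l hX0h
  · intro X a b; simp only [dl, detZ, Prod.fst_sub, Prod.snd_sub]; ring
  · exact idtyX A B C D Z hZ0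
  · exact fun X hT hG => hbnd X hG hT.1 hT.2
  · exact fun X h1 h2 h3 h4 => ⟨h1, h2, h3, h4⟩
  · exact fun X hX => hX
  · exact fun X h1 h2 => ⟨segTrue_of_strict h1, segTrue_of_strict h2⟩

/-- y-direction windowed march on the actual grid. -/
lemma ML2y
    (hbnd : ∀ X : ℤ × ℤ, X ∈ Grid m n → SegTrue A B X → SegTrue C D X →
      1 ≤ X.1 ∧ X.1 ≤ (m : ℤ) - 2 ∧ 1 ≤ X.2 ∧ X.2 ≤ (n : ℤ) - 2)
    (Z X0 : ℤ × ℤ) (H ε sq : ℤ)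
    (hsq : sq = 1 ∨ sq = -1) (hε : ε = 1 ∨ ε = -1)
    (hq : 1 ≤ sq * (C.2 - D.2))
    (hp1 : C.1 - D.1 ≤ sq * (C.2 - D.2)) (hp2 : -(sq * (C.2 - D.2)) ≤ C.1 - D.1)
    (hsr : sq * (A.2 - B.2) ≤ 0)
    (hZ0 : dl A B Z = 0)
    (halign : 0 ≤ sq * (-(detZ (B - A) (D - C))) * (X0.2 - Z.2))
    (hdir : 0 ≤ sq * (-(detZ (B - A) (D - C))) * ε)
    (hgrow : detZ (B - A) (D - C) ≠ 0 ∨ (sq * (A.2 - B.2) ≤ -1 ∧ H ≤ dl C D Z - 1))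
    (hH : sq * (C.2 - D.2) ≤ H) (hHh0 : H ≤ dl C D Z)
    (hX0g : X0 ∈ Grid m n) (hX0t1 : SegTrue A B X0) (hX0t2 : SegTrue C D X0)
    (hX0l : 1 ≤ dl C D X0) (hX0h : dl C D X0 ≤ H) : False := by
  have hgrow' : -(detZ (B - A) (D - C)) ≠ 0 ∨ (sq * (A.2 - B.2) ≤ -1 ∧ H ≤ dl C D Z - 1) := by
    rcases hgrow with h | h
    · exact Or.inl (by omega)
    · exact Or.inr h
  refine MLcore (n : ℤ) (m : ℤ) (fun Y => ((Y.2, Y.1) : ℤ × ℤ) ∈ Grid m n)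
    (fun Y => SegTrue A B (Y.2, Y.1) ∧ SegTrue C D (Y.2, Y.1))
    (fun Y => dl A B (Y.2, Y.1)) (fun Y => dl C D (Y.2, Y.1))
    (A.2 - B.2) (C.2 - D.2) (C.1 - D.1) (-(detZ (B - A) (D - C))) Z.2 (dl C D Z) H ε sq
    ?_ ?_ ?_ ?_ ?_ ?_ hsq hε hq hp1 hp2 hsr (X0.2, X0.1) (by simpa using halign)
    hdir hgrow' hH hHh0 (by simpa [Prod.mk.eta] using hX0g)
    ⟨by simpa [Prod.mk.eta] using hX0t1, by simpa [Prod.mk.eta] using hX0t2⟩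
    (by simpa [Prod.mk.eta] using hX0l) (by simpa [Prod.mk.eta] using hX0h)
  · intro Y a b; simp only [dl, detZ, Prod.fst_sub, Prod.snd_sub]; ring
  · intro Y
    have h := idtyY A B C D Z hZ0 (Y.2, Y.1)
    simp only at h ⊢
    linarith [h]
  · intro Y hT hG
    obtain ⟨h1, h2, h3, h4⟩ := hbnd (Y.2, Y.1) hG hT.1 hT.2
    exact ⟨h3, h4, h1, h2⟩
  · exact fun Y h1 h2 h3 h4 => ⟨h3, h4, h1, h2⟩
  · exact fun Y hY => ⟨hY.2.2.1, hY.2.2.2, hY.1, hY.2.1⟩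
  · exact fun Y h1 h2 => ⟨segTrue_of_strict h1, segTrue_of_strict h2⟩

/-- straight march, x-escape. -/
lemma MLSx
    (hbnd : ∀ X : ℤ × ℤ, X ∈ Grid m n → SegTrue A B X → SegTrue C D X →
      1 ≤ X.1 ∧ X.1 ≤ (m : ℤ) - 2 ∧ 1 ≤ X.2 ∧ X.2 ≤ (n : ℤ) - 2)
    (X0 : ℤ × ℤ) (ε u2 : ℤ)
    (hε : ε = 1 ∨ ε = -1) (hu2 : -1 ≤ u2 ∧ u2 ≤ 1)
    (hd1 : 0 ≤ (B.1 - A.1) * u2 - (B.2 - A.2) * ε)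
    (hd2 : 0 ≤ (D.1 - C.1) * u2 - (D.2 - C.2) * ε)
    (hX0g : X0 ∈ Grid m n)
    (hX0a : 1 ≤ dl A B X0) (hX0b : 1 ≤ dl C D X0) : False := by
  refine MLScore (m : ℤ) (n : ℤ) (fun X => X ∈ Grid m n)
    (fun X => SegTrue A B X ∧ SegTrue C D X) (dl A B) (dl C D)
    ((B.1 - A.1) * u2 - (B.2 - A.2) * ε) ((D.1 - C.1) * u2 - (D.2 - C.2) * ε) ε u2
    ?_ ?_ ?_ ?_ ?_ hε hu2 hd1 hd2 X0 hX0g hX0a hX0b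
  · intro X
    constructor <;> (simp only [dl, detZ, Prod.fst_sub, Prod.snd_sub]; ring)
  · exact fun X hT hG => hbnd X hG hT.1 hT.2
  · exact fun X h1 h2 h3 h4 => ⟨h1, h2, h3, h4⟩
  · exact fun X hX => hX
  · exact fun X h1 h2 => ⟨segTrue_of_strict h1, segTrue_of_strict h2⟩

/-- straight march, y-escape. -/
lemma MLSy
    (hbnd : ∀ X : ℤ × ℤ, X ∈ Grid m n → SegTrue A B X → SegTrue C D X →
      1 ≤ X.1 ∧ X.1 ≤ (m : ℤ) - 2 ∧ 1 ≤ X.2 ∧ X.2 ≤ (n : ℤ) - 2)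
    (X0 : ℤ × ℤ) (ε u1 : ℤ)
    (hε : ε = 1 ∨ ε = -1) (hu1 : -1 ≤ u1 ∧ u1 ≤ 1)
    (hd1 : 0 ≤ (B.1 - A.1) * ε - (B.2 - A.2) * u1)
    (hd2 : 0 ≤ (D.1 - C.1) * ε - (D.2 - C.2) * u1)
    (hX0g : X0 ∈ Grid m n)
    (hX0a : 1 ≤ dl A B X0) (hX0b : 1 ≤ dl C D X0) : False := by
  refine MLScore (n : ℤ) (m : ℤ) (fun Y => ((Y.2, Y.1) : ℤ × ℤ) ∈ Grid m n)
    (fun Y => SegTrue A B (Y.2, Y.1) ∧ SegTrue C D (Y.2, Y.1))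
    (fun Y => dl A B (Y.2, Y.1)) (fun Y => dl C D (Y.2, Y.1))
    ((B.1 - A.1) * ε - (B.2 - A.2) * u1) ((D.1 - C.1) * ε - (D.2 - C.2) * u1) ε u1
    ?_ ?_ ?_ ?_ ?_ hε hu1 hd1 hd2 (X0.2, X0.1) (by simpa [Prod.mk.eta] using hX0g)
    (by simpa [Prod.mk.eta] using hX0a) (by simpa [Prod.mk.eta] using hX0b)
  · intro Y
    constructor <;> (simp only [dl, detZ, Prod.fst_sub, Prod.snd_sub]; ring)
  · intro Y hT hG
    obtain ⟨h1, h2, h3, h4⟩ := hbnd (Y.2, Y.1) hG hT.1 hT.2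
    exact ⟨h3, h4, h1, h2⟩
  · exact fun Y h1 h2 h3 h4 => ⟨h3, h4, h1, h2⟩
  · exact fun Y hY => ⟨hY.2.2.1, hY.2.2.2, hY.1, hY.2.1⟩
  · exact fun Y h1 h2 => ⟨segTrue_of_strict h1, segTrue_of_strict h2⟩

end Wrappers

section Key

lemma exists_sign {z : ℤ} (h : z ≠ 0) : ∃ σ : ℤ, (σ = 1 ∨ σ = -1) ∧ σ * z = |z| := by
  rcases h.lt_or_gt with h | h
  · exact ⟨-1, Or.inr rfl, by rw [abs_of_neg h]; ring⟩
  · exact ⟨1, Or.inl rfl, by rw [abs_of_pos h]; ring⟩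

lemma sign_mul_neg {σ z w : ℤ} (hσ : σ = 1 ∨ σ = -1) (hzw : z * w ≤ 0)
    (hz : σ * z = |z|) (hz0 : z ≠ 0) (hw0 : w ≠ 0) : σ * w = -|w| := by
  rcases lt_or_gt_of_ne hz0 with h2 | h2 <;> rcases lt_or_gt_of_ne hw0 with h | h
  · -- z<0, w<0 : zw > 0 contradiction
    exfalso; nlinarith
  · -- z<0, w>0 : σ = -1
    rcases hσ with rfl | rfl
    · exfalso; rw [abs_of_neg h2] at hz; nlinarith
    · rw [abs_of_pos h]; ring
  · -- z>0, w<0 : σ = 1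
    rcases hσ with rfl | rfl
    · rw [abs_of_neg h]; ring
    · exfalso; rw [abs_of_pos h2] at hz; nlinarith
  · exfalso; nlinarith

lemma one_le_abs' {z : ℤ} (h : z ≠ 0) : 1 ≤ |z| := by
  rcases lt_or_gt_of_ne h with h | h
  · rw [abs_of_neg h]; omega
  · rw [abs_of_pos h]; omega

end Key

section KeyMain
variable {m n : ℕ} {A B C D : ℤ × ℤ}

lemma segTrue_self (hprAB : PrimeSeg A B) : SegTrue A B A := by
  have hABne : ¬(B.1 - A.1 = 0 ∧ B.2 - A.2 = 0) := by
    rintro ⟨h1, h2⟩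
    rw [PrimeSeg, h1, h2] at hprAB
    simp at hprAB
  left
  constructor
  · simp [detZ]
  · have h1 : (A.1 - A.1) ^ 2 + (A.2 - A.2) ^ 2 = 0 := by ring
    rw [h1]
    rcases (not_and_or.1 hABne) with h | h
    · nlinarith [sq_nonneg (A.1 - B.1), sq_nonneg (A.2 - B.2), one_le_abs' h,
        sq_abs (B.1 - A.1), sq_nonneg (|B.1 - A.1| - 1)]
    · nlinarith [sq_nonneg (A.1 - B.1), sq_nonneg (A.2 - B.2), one_le_abs' h,
        sq_abs (B.2 - A.2), sq_nonneg (|B.2 - A.2| - 1)]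

lemma dl_nonneg_of_segTrue {X : ℤ × ℤ} (h : SegTrue C D X) : 0 ≤ dl C D X := by
  rcases h with ⟨h, -⟩ | h
  · exact le_of_eq (by rw [dl]; omega)
  · exact le_of_lt h

lemma prodne_of_prime (hpr : PrimeSeg A B) : ¬(B.1 - A.1 = 0 ∧ B.2 - A.2 = 0) := by
  rintro ⟨h1, h2⟩
  rw [PrimeSeg, h1, h2] at hpr
  simp at hpr

lemma dlAB_A (a b : ℤ) : dl A B (A.1 + a, A.2 + b) = (B.1 - A.1) * b - (B.2 - A.2) * a := by
  simp only [dl, detZ, Prod.fst_sub, Prod.snd_sub]; ring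

lemma dlCD_A (a b : ℤ) : dl C D (A.1 + a, A.2 + b) =
    dl C D A + ((D.1 - C.1) * b - (D.2 - C.2) * a) := by
  simp only [dl, detZ, Prod.fst_sub, Prod.snd_sub]; ring

lemma dlAB_B (a b : ℤ) : dl A B (B.1 + a, B.2 + b) = (B.1 - A.1) * b - (B.2 - A.2) * a := by
  simp only [dl, detZ, Prod.fst_sub, Prod.snd_sub]; ring

lemma dlCD_B (a b : ℤ) : dl C D (B.1 + a, B.2 + b) =
    dl C D B + ((D.1 - C.1) * b - (D.2 - C.2) * a) := by
  simp only [dl, detZ, Prod.fst_sub, Prod.snd_sub]; ring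

lemma dlAB_self : dl A B A = 0 := by simp [dl, detZ]

lemma dlAB_other : dl A B B = 0 := by
  simp only [dl, detZ, Prod.fst_sub, Prod.snd_sub]; ring

lemma dl_delta : dl C D B = dl C D A - detZ (B - A) (D - C) := by
  simp only [dl, detZ, Prod.fst_sub, Prod.snd_sub]; ring

set_option maxHeartbeats 1000000 in
lemma keyStep1
    (hAg : A ∈ Grid m n) (hprAB : PrimeSeg A B)
    (hCDA : SegTrue C D A)
    (hbnd : ∀ X : ℤ × ℤ, X ∈ Grid m n → SegTrue A B X → SegTrue C D X →
      1 ≤ X.1 ∧ X.1 ≤ (m : ℤ) - 2 ∧ 1 ≤ X.2 ∧ X.2 ≤ (n : ℤ) - 2) :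
    (B.1 - A.1) * (D.1 - C.1) ≤ 0 := by
  have hABA : SegTrue A B A := segTrue_self hprAB
  obtain ⟨hAx1, hAx2, hAy1, hAy2⟩ := hbnd A hAg hABA hCDA
  have hA0 : 0 ≤ dl C D A := dl_nonneg_of_segTrue hCDA
  by_contra hcon
  push_neg at hcon
  have hr0 : B.1 - A.1 ≠ 0 := by intro h; rw [h] at hcon; simp at hcon
  have hp0 : D.1 - C.1 ≠ 0 := by intro h; rw [h] at hcon; simp at hcon
  obtain ⟨σ, hσ, hσr⟩ := exists_sign hr0
  have hσp : σ * (D.1 - C.1) = |D.1 - C.1| := by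
    rcases lt_or_gt_of_ne hr0 with h | h <;> rcases lt_or_gt_of_ne hp0 with h' | h'
    · rcases hσ with rfl | rfl
      · exfalso; rw [abs_of_neg h] at hσr; nlinarith
      · rw [abs_of_neg h']; ring
    · exfalso; nlinarith
    · exfalso; nlinarith
    · rcases hσ with rfl | rfl
      · rw [abs_of_pos h']; ring
      · exfalso; rw [abs_of_pos h] at hσr; nlinarith
  have hεb : -1 ≤ σ ∧ σ ≤ 1 := by rcases hσ with rfl | rfl <;> norm_num
  refine MLSy hbnd (A.1, A.2 + σ) σ 0 hσ (by norm_num) ?_ ?_ ?_ ?_ ?_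
  · have : (B.1 - A.1) * σ - (B.2 - A.2) * 0 = σ * (B.1 - A.1) := by ring
    rw [this, hσr]
    exact abs_nonneg _
  · have : (D.1 - C.1) * σ - (D.2 - C.2) * 0 = σ * (D.1 - C.1) := by ring
    rw [this, hσp]
    exact abs_nonneg _
  · exact ⟨by simp only; linarith, by simp only; linarith [hεb.1, hεb.2],
      by simp only; linarith [hεb.1], by simp only; linarith [hεb.2]⟩
  · rw [show ((A.1, A.2 + σ) : ℤ × ℤ) = (A.1 + 0, A.2 + σ) by norm_num, dlAB_A]
    have : (B.1 - A.1) * σ - (B.2 - A.2) * 0 = σ * (B.1 - A.1) := by ring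
    rw [this, hσr]
    exact one_le_abs' hr0
  · rw [show ((A.1, A.2 + σ) : ℤ × ℤ) = (A.1 + 0, A.2 + σ) by norm_num, dlCD_A]
    have : dl C D A + ((D.1 - C.1) * σ - (D.2 - C.2) * 0) = dl C D A + σ * (D.1 - C.1) := by
      ring
    rw [this, hσp]
    have := one_le_abs' hp0
    linarith

set_option maxHeartbeats 1000000 in
lemma keyStep2
    (hAg : A ∈ Grid m n) (hprAB : PrimeSeg A B)
    (hCDA : SegTrue C D A)
    (hbnd : ∀ X : ℤ × ℤ, X ∈ Grid m n → SegTrue A B X → SegTrue C D X →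
      1 ≤ X.1 ∧ X.1 ≤ (m : ℤ) - 2 ∧ 1 ≤ X.2 ∧ X.2 ≤ (n : ℤ) - 2) :
    (B.2 - A.2) * (D.2 - C.2) ≤ 0 := by
  have hABA : SegTrue A B A := segTrue_self hprAB
  obtain ⟨hAx1, hAx2, hAy1, hAy2⟩ := hbnd A hAg hABA hCDA
  have hA0 : 0 ≤ dl C D A := dl_nonneg_of_segTrue hCDA
  by_contra hcon
  push_neg at hcon
  have hs0 : B.2 - A.2 ≠ 0 := by intro h; rw [h] at hcon; simp at hcon
  have hq0 : D.2 - C.2 ≠ 0 := by intro h; rw [h] at hcon; simp at hcon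
  obtain ⟨σ, hσ, hσs⟩ := exists_sign hs0
  have hσq : σ * (D.2 - C.2) = |D.2 - C.2| := by
    rcases lt_or_gt_of_ne hs0 with h | h <;> rcases lt_or_gt_of_ne hq0 with h' | h'
    · rcases hσ with rfl | rfl
      · exfalso; rw [abs_of_neg h] at hσs; nlinarith
      · rw [abs_of_neg h']; ring
    · exfalso; nlinarith
    · exfalso; nlinarith
    · rcases hσ with rfl | rfl
      · rw [abs_of_pos h']; ring
      · exfalso; rw [abs_of_pos h] at hσs; nlinarith
  have hεb : -1 ≤ σ ∧ σ ≤ 1 := by rcases hσ with rfl | rfl <;> norm_num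
  refine MLSx hbnd (A.1 + -σ, A.2) (-σ) 0 (by rcases hσ with rfl | rfl <;> simp)
    (by norm_num) ?_ ?_ ?_ ?_ ?_
  · have : (B.1 - A.1) * 0 - (B.2 - A.2) * (-σ) = σ * (B.2 - A.2) := by ring
    rw [this, hσs]
    exact abs_nonneg _
  · have : (D.1 - C.1) * 0 - (D.2 - C.2) * (-σ) = σ * (D.2 - C.2) := by ring
    rw [this, hσq]
    exact abs_nonneg _
  · exact ⟨by simp only; linarith [hεb.1, hεb.2], by simp only; linarith [hεb.1, hεb.2],
      by simp only; linarith, by simp only; linarith⟩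
  · rw [show ((A.1 + -σ, A.2) : ℤ × ℤ) = (A.1 + -σ, A.2 + 0) by norm_num, dlAB_A]
    have : (B.1 - A.1) * 0 - (B.2 - A.2) * (-σ) = σ * (B.2 - A.2) := by ring
    rw [this, hσs]
    exact one_le_abs' hs0
  · rw [show ((A.1 + -σ, A.2) : ℤ × ℤ) = (A.1 + -σ, A.2 + 0) by norm_num, dlCD_A]
    have : (D.1 - C.1) * 0 - (D.2 - C.2) * (-σ) = σ * (D.2 - C.2) := by ring
    rw [this, hσq]
    have := one_le_abs' hq0
    linarith

set_option maxHeartbeats 1000000 in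
lemma keyA
    (hAg : A ∈ Grid m n)
    (hprAB : PrimeSeg A B) (hprCD : PrimeSeg C D)
    (hCDA : SegTrue C D A)
    (hbnd : ∀ X : ℤ × ℤ, X ∈ Grid m n → SegTrue A B X → SegTrue C D X →
      1 ≤ X.1 ∧ X.1 ≤ (m : ℤ) - 2 ∧ 1 ≤ X.2 ∧ X.2 ≤ (n : ℤ) - 2) :
    dl C D A ≤ max |D.1 - C.1| |D.2 - C.2| := by
  have hABne := prodne_of_prime hprAB
  have hCDne := prodne_of_prime hprCD
  have hABA : SegTrue A B A := segTrue_self hprAB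
  obtain ⟨hAx1, hAx2, hAy1, hAy2⟩ := hbnd A hAg hABA hCDA
  have hA0 : 0 ≤ dl C D A := dl_nonneg_of_segTrue hCDA
  have hstep1 := keyStep1 hAg hprAB hCDA hbnd
  have hstep2 := keyStep2 hAg hprAB hCDA hbnd
  by_contra hcon
  push_neg at hcon
  have hmax1 : |D.1 - C.1| + 1 ≤ dl C D A := by
    have := le_max_left |D.1 - C.1| |D.2 - C.2|; omega
  have hmax2 : |D.2 - C.2| + 1 ≤ dl C D A := by
    have := le_max_right |D.1 - C.1| |D.2 - C.2|; omega
  by_cases hpq : |D.2 - C.2| ≤ |D.1 - C.1|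
  · -- march in x
    have hp0 : D.1 - C.1 ≠ 0 := by
      intro h
      rw [h] at hpq
      simp only [abs_zero] at hpq
      exact hCDne ⟨h, abs_eq_zero.1 (le_antisymm hpq (abs_nonneg _))⟩
    obtain ⟨sp, hsp, hspp⟩ := exists_sign hp0
    have hp1le : 1 ≤ |D.1 - C.1| := one_le_abs' hp0
    have hq1' : D.2 - C.2 ≤ sp * (D.1 - C.1) := by
      rw [hspp]; exact le_trans (le_abs_self _) hpq
    have hq2' : -(sp * (D.1 - C.1)) ≤ D.2 - C.2 := by
      rw [hspp]; have := neg_abs_le (D.2 - C.2); omega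
    have hpr : (D.1 - C.1) * (B.1 - A.1) ≤ 0 := by
      calc (D.1 - C.1) * (B.1 - A.1) = (B.1 - A.1) * (D.1 - C.1) := by ring
      _ ≤ 0 := hstep1
    have hrp : sp * (B.1 - A.1) ≤ 0 := by
      by_cases hr0 : B.1 - A.1 = 0
      · rw [hr0]; simp
      · rw [sign_mul_neg hsp hpr hspp hp0 hr0]
        have := abs_nonneg (B.1 - A.1); omega
    by_cases hδ0 : detZ (B - A) (D - C) = 0
    · -- parallel case
      have hr0 : B.1 - A.1 ≠ 0 := by
        intro h
        have hs0 : B.2 - A.2 = 0 := by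
          have hδ : (B.1 - A.1) * (D.2 - C.2) - (B.2 - A.2) * (D.1 - C.1) = 0 := hδ0
          rw [h] at hδ
          simp only [zero_mul, zero_sub, neg_eq_zero] at hδ
          rcases mul_eq_zero.1 hδ with h' | h'
          · exact h'
          · exact absurd h' hp0
        exact hABne ⟨h, hs0⟩
      obtain ⟨σr, hσr, hσrr⟩ := exists_sign hr0
      have hpσr : σr * (D.1 - C.1) = -|D.1 - C.1| :=
        sign_mul_neg hσr hstep1 hσrr hr0 hp0
      have hεb : -1 ≤ σr ∧ σr ≤ 1 := by rcases hσr with rfl | rfl <;> norm_num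
      have hX0CD : dl C D (A.1 + 0, A.2 + σr) = dl C D A - |D.1 - C.1| := by
        rw [dlCD_A]
        have : dl C D A + ((D.1 - C.1) * σr - (D.2 - C.2) * 0) =
            dl C D A + σr * (D.1 - C.1) := by ring
        rw [this, hpσr]; ring
      refine ML2x hbnd A (A.1 + 0, A.2 + σr) (dl C D A - 1) 1 sp hsp (Or.inl rfl)
        (by rw [hspp]; exact hp1le) hq1' hq2' hrp dlAB_self ?_ ?_ ?_ ?_ (by omega) ?_ ?_ ?_ ?_ ?_
      · simp
      · simp [hδ0]
      · refine Or.inr ⟨?_, by omega⟩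
        rw [sign_mul_neg hsp hpr hspp hp0 hr0]
        have := one_le_abs' hr0; omega
      · rw [hspp]; omega
      · exact ⟨by simp only; linarith, by simp only; linarith [hεb.1, hεb.2],
          by simp only; linarith [hεb.1], by simp only; linarith [hεb.2]⟩
      · apply segTrue_of_strict
        rw [dlAB_A]
        have : (B.1 - A.1) * σr - (B.2 - A.2) * 0 = σr * (B.1 - A.1) := by ring
        rw [this, hσrr]
        exact one_le_abs' hr0
      · exact segTrue_of_strict (by rw [hX0CD]; omega)
      · rw [hX0CD]; omega
      · rw [hX0CD]; omega
    · -- δ ≠ 0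
      rcases le_or_gt 0 (sp * detZ (B - A) (D - C)) with hd | hd
      · refine ML2x hbnd A A (dl C D A) 1 sp hsp (Or.inl rfl)
          (by rw [hspp]; exact hp1le) hq1' hq2' hrp dlAB_self (by simp) (by simpa using hd)
          (Or.inl hδ0) (by rw [hspp]; omega) le_rfl hAg hABA hCDA (by omega) le_rfl
      · refine ML2x hbnd A A (dl C D A) (-1) sp hsp (Or.inr rfl)
          (by rw [hspp]; exact hp1le) hq1' hq2' hrp dlAB_self (by simp) (by nlinarith)
          (Or.inl hδ0) (by rw [hspp]; omega) le_rfl hAg hABA hCDA (by omega) le_rfl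
  · -- march in y
    push_neg at hpq
    have hq0 : D.2 - C.2 ≠ 0 := by
      intro h
      rw [h] at hpq
      simp only [abs_zero] at hpq
      have := abs_nonneg (D.1 - C.1); omega
    have hq0' : C.2 - D.2 ≠ 0 := by omega
    obtain ⟨sq, hsq, hsqq⟩ := exists_sign hq0'
    have habs : |C.2 - D.2| = |D.2 - C.2| := by rw [abs_sub_comm]
    have habs' : |C.1 - D.1| = |D.1 - C.1| := by rw [abs_sub_comm]
    have hq1le : 1 ≤ |D.2 - C.2| := one_le_abs' hq0
    have hp1' : C.1 - D.1 ≤ sq * (C.2 - D.2) := by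
      rw [hsqq, habs]
      have := le_abs_self (C.1 - D.1); omega
    have hp2' : -(sq * (C.2 - D.2)) ≤ C.1 - D.1 := by
      rw [hsqq, habs]
      have := neg_abs_le (C.1 - D.1); omega
    have hqs : (C.2 - D.2) * (A.2 - B.2) ≤ 0 := by
      calc (C.2 - D.2) * (A.2 - B.2) = (B.2 - A.2) * (D.2 - C.2) := by ring
      _ ≤ 0 := hstep2
    have hsr : sq * (A.2 - B.2) ≤ 0 := by
      by_cases hs0 : A.2 - B.2 = 0
      · rw [hs0]; simp
      · rw [sign_mul_neg hsq hqs hsqq hq0' hs0]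
        have := abs_nonneg (A.2 - B.2); omega
    by_cases hδ0 : detZ (B - A) (D - C) = 0
    · -- parallel, y
      have hs0 : B.2 - A.2 ≠ 0 := by
        intro h
        have hr0 : B.1 - A.1 = 0 := by
          have hδ : (B.1 - A.1) * (D.2 - C.2) - (B.2 - A.2) * (D.1 - C.1) = 0 := hδ0
          rw [h] at hδ
          simp only [zero_mul, sub_zero] at hδ
          rcases mul_eq_zero.1 hδ with h' | h'
          · exact h'
          · exact absurd h' hq0
        exact hABne ⟨hr0, h⟩
      have hs0' : A.2 - B.2 ≠ 0 := by omega
      obtain ⟨σs, hσs, hσss⟩ := exists_sign hs0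
      have hqσs : σs * (D.2 - C.2) = -|D.2 - C.2| :=
        sign_mul_neg hσs hstep2 hσss hs0 hq0
      have hεb : -1 ≤ σs ∧ σs ≤ 1 := by rcases hσs with rfl | rfl <;> norm_num
      have hX0CD : dl C D (A.1 + -σs, A.2 + 0) = dl C D A - |D.2 - C.2| := by
        rw [dlCD_A]
        have : dl C D A + ((D.1 - C.1) * 0 - (D.2 - C.2) * (-σs)) =
            dl C D A + σs * (D.2 - C.2) := by ring
        rw [this, hqσs]; ring
      refine ML2y hbnd A (A.1 + -σs, A.2 + 0) (dl C D A - 1) 1 sq hsq (Or.inl rfl)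
        (by rw [hsqq, habs]; exact hq1le) hp1' hp2' hsr dlAB_self ?_ ?_ ?_ ?_ (by omega) ?_ ?_ ?_ ?_ ?_
      · simp
      · simp [hδ0]
      · refine Or.inr ⟨?_, by omega⟩
        rw [sign_mul_neg hsq hqs hsqq hq0' hs0']
        have := one_le_abs' hs0'; omega
      · rw [hsqq, habs]; omega
      · exact ⟨by simp only; linarith [hεb.1, hεb.2], by simp only; linarith [hεb.1, hεb.2],
          by simp only; linarith, by simp only; linarith⟩
      · apply segTrue_of_strict
        rw [dlAB_A]
        have : (B.1 - A.1) * 0 - (B.2 - A.2) * (-σs) = σs * (B.2 - A.2) := by ring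
        rw [this, hσss]
        exact one_le_abs' hs0
      · exact segTrue_of_strict (by rw [hX0CD]; omega)
      · rw [hX0CD]; omega
      · rw [hX0CD]; omega
    · -- δ ≠ 0, y
      rcases le_or_gt 0 (sq * (-(detZ (B - A) (D - C)))) with hd | hd
      · refine ML2y hbnd A A (dl C D A) 1 sq hsq (Or.inl rfl)
          (by rw [hsqq, habs]; exact hq1le) hp1' hp2' hsr dlAB_self (by simp) (by simpa using hd)
          (Or.inl hδ0) (by rw [hsqq, habs]; omega) le_rfl hAg hABA hCDA (by omega) le_rfl
      · refine ML2y hbnd A A (dl C D A) (-1) sq hsq (Or.inr rfl)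
          (by rw [hsqq, habs]; exact hq1le) hp1' hp2' hsr dlAB_self (by simp) (by nlinarith)
          (Or.inl hδ0) (by rw [hsqq, habs]; omega) le_rfl hAg hABA hCDA (by omega) le_rfl


set_option maxHeartbeats 1000000 in
lemma keyBbranchX
    (hbnd : ∀ X : ℤ × ℤ, X ∈ Grid m n → SegTrue A B X → SegTrue C D X →
      1 ≤ X.1 ∧ X.1 ≤ (m : ℤ) - 2 ∧ 1 ≤ X.2 ∧ X.2 ≤ (n : ℤ) - 2)
    (hABne : ¬(B.1 - A.1 = 0 ∧ B.2 - A.2 = 0))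
    (hCDne : ¬(D.1 - C.1 = 0 ∧ D.2 - C.2 = 0))
    (hstep1 : (B.1 - A.1) * (D.1 - C.1) ≤ 0) (hstep2 : (B.2 - A.2) * (D.2 - C.2) ≤ 0)
    (hδ0 : detZ (B - A) (D - C) ≠ 0)
    (hmax1 : |D.1 - C.1| + 1 ≤ dl C D B) (hmax2 : |D.2 - C.2| + 1 ≤ dl C D B)
    (hB1 : 0 ≤ B.1) (hB2 : B.1 < (m : ℤ)) (hB3 : 0 ≤ B.2) (hB4 : B.2 < (n : ℤ))
    (hAx1 : 1 ≤ A.1) (hAx2 : A.1 ≤ (m : ℤ) - 2) (hAy1 : 1 ≤ A.2) (hAy2 : A.2 ≤ (n : ℤ) - 2)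
    (hpq : |D.2 - C.2| ≤ |D.1 - C.1|) : False := by
  have hp0 : D.1 - C.1 ≠ 0 := by
    intro h
    rw [h] at hpq
    simp only [abs_zero] at hpq
    exact hCDne ⟨h, abs_eq_zero.1 (le_antisymm hpq (abs_nonneg _))⟩
  obtain ⟨sp, hsp, hspp⟩ := exists_sign hp0
  have hp1le : 1 ≤ |D.1 - C.1| := one_le_abs' hp0
  have hq1' : D.2 - C.2 ≤ sp * (D.1 - C.1) := by
    rw [hspp]; exact le_trans (le_abs_self _) hpq
  have hq2' : -(sp * (D.1 - C.1)) ≤ D.2 - C.2 := by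
    rw [hspp]; have := neg_abs_le (D.2 - C.2); omega
  have hpr : (D.1 - C.1) * (B.1 - A.1) ≤ 0 := by
    calc (D.1 - C.1) * (B.1 - A.1) = (B.1 - A.1) * (D.1 - C.1) := by ring
    _ ≤ 0 := hstep1
  have hrp : sp * (B.1 - A.1) ≤ 0 := by
    by_cases hr0 : B.1 - A.1 = 0
    · rw [hr0]; simp
    · rw [sign_mul_neg hsp hpr hspp hp0 hr0]
      have := abs_nonneg (B.1 - A.1); omega
  by_cases hr0 : B.1 - A.1 = 0
  · -- r = 0 : horizontal probe
    have hs0 : B.2 - A.2 ≠ 0 := fun h => hABne ⟨hr0, h⟩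
    obtain ⟨σs, hσs, hσss⟩ := exists_sign hs0
    have hσb : -1 ≤ σs ∧ σs ≤ 1 := by rcases hσs with rfl | rfl <;> norm_num
    have hqσ1 : σs * (D.2 - C.2) ≤ 0 ∧ -|D.2 - C.2| ≤ σs * (D.2 - C.2) := by
      by_cases hq0 : D.2 - C.2 = 0
      · rw [hq0]; simp
      · rw [sign_mul_neg hσs hstep2 hσss hs0 hq0]
        exact ⟨by have := abs_nonneg (D.2 - C.2); omega, le_rfl⟩
    have hP1AB : dl A B (B.1 + -σs, B.2 + 0) = |B.2 - A.2| := by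
      rw [dlAB_B]
      have : (B.1 - A.1) * 0 - (B.2 - A.2) * (-σs) = σs * (B.2 - A.2) := by ring
      rw [this, hσss]
    have hP1CD : dl C D (B.1 + -σs, B.2 + 0) = dl C D B + σs * (D.2 - C.2) := by
      rw [dlCD_B]; ring_nf
    have hP1CDa : 1 ≤ dl C D (B.1 + -σs, B.2 + 0) := by rw [hP1CD]; omega
    have hP1CDb : dl C D (B.1 + -σs, B.2 + 0) ≤ dl C D B := by rw [hP1CD]; omega
    by_cases hP1g : ((B.1 + -σs, B.2 + 0) : ℤ × ℤ) ∈ Grid m n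
    · -- march from the probe
      have hδeq : detZ (B - A) (D - C) = -((B.2 - A.2) * (D.1 - C.1)) := by
        have : detZ (B - A) (D - C) =
            (B.1 - A.1) * (D.2 - C.2) - (B.2 - A.2) * (D.1 - C.1) := rfl
        rw [this, hr0]; ring
      have halign : 0 ≤ sp * detZ (B - A) (D - C) * ((B.1 + -σs, B.2 + 0).1 - B.1) := by
        have h1 : sp * detZ (B - A) (D - C) * ((B.1 + -σs) - B.1) =
            (sp * (D.1 - C.1)) * (σs * (B.2 - A.2)) := by rw [hδeq]; ring
        simp only at h1 ⊢
        rw [h1, hspp, hσss]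
        exact mul_nonneg (abs_nonneg _) (abs_nonneg _)
      rcases le_or_gt 0 (sp * detZ (B - A) (D - C)) with hd | hd
      · exact ML2x hbnd B (B.1 + -σs, B.2 + 0) (dl C D B) 1 sp hsp (Or.inl rfl)
          (by rw [hspp]; exact hp1le) hq1' hq2' hrp dlAB_other halign (by simpa using hd)
          (Or.inl hδ0) (by rw [hspp]; omega) le_rfl hP1g
          (segTrue_of_strict (by rw [hP1AB]; exact one_le_abs' hs0))
          (segTrue_of_strict hP1CDa) hP1CDa hP1CDb
      · exact ML2x hbnd B (B.1 + -σs, B.2 + 0) (dl C D B) (-1) sp hsp (Or.inr rfl)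
          (by rw [hspp]; exact hp1le) hq1' hq2' hrp dlAB_other halign (by nlinarith)
          (Or.inl hδ0) (by rw [hspp]; omega) le_rfl hP1g
          (segTrue_of_strict (by rw [hP1AB]; exact one_le_abs' hs0))
          (segTrue_of_strict hP1CDa) hP1CDa hP1CDb
    · -- probe out of grid : B.1 is on a vertical edge, but B.1 = A.1 interior
      have hcoord : ¬(0 ≤ B.1 + -σs ∧ B.1 + -σs < (m : ℤ) ∧ 0 ≤ B.2 + 0 ∧ B.2 + 0 < (n : ℤ)) :=
        fun h => hP1g (grid_mem.mpr h)
      rcases hσs with rfl | rfl <;> omega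
  · -- r ≠ 0 : vertical probe
    have hrp' : (B.1 - A.1) * (D.1 - C.1) ≤ -1 := by
      rcases lt_or_gt_of_ne hr0 with h | h <;> rcases lt_or_gt_of_ne hp0 with h' | h'
      · exfalso; nlinarith [hstep1]
      · nlinarith
      · nlinarith
      · exfalso; nlinarith [hstep1]
    obtain ⟨σr, hσr, hσrr⟩ := exists_sign hr0
    have hσb : -1 ≤ σr ∧ σr ≤ 1 := by rcases hσr with rfl | rfl <;> norm_num
    have hpσr : σr * (D.1 - C.1) = -|D.1 - C.1| :=
      sign_mul_neg hσr hstep1 hσrr hr0 hp0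
    have hP1AB : dl A B (B.1 + 0, B.2 + σr) = |B.1 - A.1| := by
      rw [dlAB_B]
      have : (B.1 - A.1) * σr - (B.2 - A.2) * 0 = σr * (B.1 - A.1) := by ring
      rw [this, hσrr]
    have hP1CD : dl C D (B.1 + 0, B.2 + σr) = dl C D B - |D.1 - C.1| := by
      rw [dlCD_B]
      have : dl C D B + ((D.1 - C.1) * σr - (D.2 - C.2) * 0) =
          dl C D B + σr * (D.1 - C.1) := by ring
      rw [this, hpσr]; ring
    by_cases hP1g : ((B.1 + 0, B.2 + σr) : ℤ × ℤ) ∈ Grid m n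
    · rcases le_or_gt 0 (sp * detZ (B - A) (D - C)) with hd | hd
      · exact ML2x hbnd B (B.1 + 0, B.2 + σr) (dl C D B) 1 sp hsp (Or.inl rfl)
          (by rw [hspp]; exact hp1le) hq1' hq2' hrp dlAB_other (by simp) (by simpa using hd)
          (Or.inl hδ0) (by rw [hspp]; omega) le_rfl hP1g
          (segTrue_of_strict (by rw [hP1AB]; exact one_le_abs' hr0))
          (segTrue_of_strict (by rw [hP1CD]; omega)) (by rw [hP1CD]; omega)
          (by rw [hP1CD]; omega)
      · exact ML2x hbnd B (B.1 + 0, B.2 + σr) (dl C D B) (-1) sp hsp (Or.inr rfl)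
          (by rw [hspp]; exact hp1le) hq1' hq2' hrp dlAB_other (by simp) (by nlinarith)
          (Or.inl hδ0) (by rw [hspp]; omega) le_rfl hP1g
          (segTrue_of_strict (by rw [hP1AB]; exact one_le_abs' hr0))
          (segTrue_of_strict (by rw [hP1CD]; omega)) (by rw [hP1CD]; omega)
          (by rw [hP1CD]; omega)
    · -- B is on a horizontal edge
      have hcoord : ¬(0 ≤ B.1 + 0 ∧ B.1 + 0 < (m : ℤ) ∧ 0 ≤ B.2 + σr ∧ B.2 + σr < (n : ℤ)) :=
        fun h => hP1g (grid_mem.mpr h)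
      have hrval : σr * (B.1 - A.1) = |B.1 - A.1| := hσrr
      have hr1 : 1 ≤ |B.1 - A.1| := one_le_abs' hr0
      rcases hσr with rfl | rfl
      · -- σr = 1, so r ≥ 1 and B.2 = n - 1
        have hrpos : 1 ≤ B.1 - A.1 := by
          rcases lt_or_gt_of_ne hr0 with h | h
          · exfalso; rw [abs_of_neg h] at hrval; omega
          · omega
        have hBtop : B.2 = (n : ℤ) - 1 := by omega
        rcases le_or_gt (B.2 - A.2) 0 with hs | hs
        · omega
        · -- s ≥ 1 : horizontal probe H1 = (B.1 - 1, B.2)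
          have hsq0 : D.2 - C.2 ≤ 0 := by nlinarith [hstep2]
          have habsq : |D.2 - C.2| = -(D.2 - C.2) := abs_of_nonpos hsq0
          have hH1AB : dl A B (B.1 + -1, B.2 + 0) = B.2 - A.2 := by
            rw [dlAB_B]; ring
          have hH1CD : dl C D (B.1 + -1, B.2 + 0) = dl C D B + (D.2 - C.2) := by
            rw [dlCD_B]; ring
          by_cases hH1g : ((B.1 + -1, B.2 + 0) : ℤ × ℤ) ∈ Grid m n
          · obtain ⟨-, -, -, hc4⟩ := hbnd _ hH1g
              (segTrue_of_strict (by rw [hH1AB]; omega))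
              (segTrue_of_strict (by rw [hH1CD]; omega))
            simp only at hc4
            omega
          · have hcoord2 : ¬(0 ≤ B.1 + -1 ∧ B.1 + -1 < (m : ℤ) ∧
                0 ≤ B.2 + 0 ∧ B.2 + 0 < (n : ℤ)) := fun h => hH1g (grid_mem.mpr h)
            omega
      · -- σr = -1, so r ≤ -1 and B.2 = 0
        have hrneg : B.1 - A.1 ≤ -1 := by
          rcases lt_or_gt_of_ne hr0 with h | h
          · omega
          · exfalso; rw [abs_of_pos h] at hrval; omega
        have hBbot : B.2 = 0 := by omega
        rcases le_or_gt 0 (B.2 - A.2) with hs | hs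
        · omega
        · -- s ≤ -1 : horizontal probe H1 = (B.1 + 1, B.2)
          have hsq0 : 0 ≤ D.2 - C.2 := by nlinarith [hstep2]
          have habsq : |D.2 - C.2| = D.2 - C.2 := abs_of_nonneg hsq0
          have hH1AB : dl A B (B.1 + 1, B.2 + 0) = -(B.2 - A.2) := by
            rw [dlAB_B]; ring
          have hH1CD : dl C D (B.1 + 1, B.2 + 0) = dl C D B - (D.2 - C.2) := by
            rw [dlCD_B]; ring
          by_cases hH1g : ((B.1 + 1, B.2 + 0) : ℤ × ℤ) ∈ Grid m n
          · obtain ⟨-, -, hc3, -⟩ := hbnd _ hH1g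
              (segTrue_of_strict (by rw [hH1AB]; omega))
              (segTrue_of_strict (by rw [hH1CD]; omega))
            simp only at hc3
            omega
          · have hcoord2 : ¬(0 ≤ B.1 + 1 ∧ B.1 + 1 < (m : ℤ) ∧
                0 ≤ B.2 + 0 ∧ B.2 + 0 < (n : ℤ)) := fun h => hH1g (grid_mem.mpr h)
            omega

set_option maxHeartbeats 1000000 in
lemma keyBbranchY
    (hbnd : ∀ X : ℤ × ℤ, X ∈ Grid m n → SegTrue A B X → SegTrue C D X →
      1 ≤ X.1 ∧ X.1 ≤ (m : ℤ) - 2 ∧ 1 ≤ X.2 ∧ X.2 ≤ (n : ℤ) - 2)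
    (hABne : ¬(B.1 - A.1 = 0 ∧ B.2 - A.2 = 0))
    (hCDne : ¬(D.1 - C.1 = 0 ∧ D.2 - C.2 = 0))
    (hstep1 : (B.1 - A.1) * (D.1 - C.1) ≤ 0) (hstep2 : (B.2 - A.2) * (D.2 - C.2) ≤ 0)
    (hδ0 : detZ (B - A) (D - C) ≠ 0)
    (hmax1 : |D.1 - C.1| + 1 ≤ dl C D B) (hmax2 : |D.2 - C.2| + 1 ≤ dl C D B)
    (hB1 : 0 ≤ B.1) (hB2 : B.1 < (m : ℤ)) (hB3 : 0 ≤ B.2) (hB4 : B.2 < (n : ℤ))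
    (hAx1 : 1 ≤ A.1) (hAx2 : A.1 ≤ (m : ℤ) - 2) (hAy1 : 1 ≤ A.2) (hAy2 : A.2 ≤ (n : ℤ) - 2)
    (hpq : ¬(|D.2 - C.2| ≤ |D.1 - C.1|)) : False := by
  push_neg at hpq
  have hq0 : D.2 - C.2 ≠ 0 := by
    intro h
    rw [h] at hpq
    simp only [abs_zero] at hpq
    have := abs_nonneg (D.1 - C.1); omega
  have hq0' : C.2 - D.2 ≠ 0 := by omega
  obtain ⟨sq, hsq, hsqq⟩ := exists_sign hq0'
  have habs : |C.2 - D.2| = |D.2 - C.2| := by rw [abs_sub_comm]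
  have habs' : |C.1 - D.1| = |D.1 - C.1| := by rw [abs_sub_comm]
  have hq1le : 1 ≤ |D.2 - C.2| := one_le_abs' hq0
  have hp1' : C.1 - D.1 ≤ sq * (C.2 - D.2) := by
    rw [hsqq, habs]
    have := le_abs_self (C.1 - D.1); omega
  have hp2' : -(sq * (C.2 - D.2)) ≤ C.1 - D.1 := by
    rw [hsqq, habs]
    have := neg_abs_le (C.1 - D.1); omega
  have hqs : (C.2 - D.2) * (A.2 - B.2) ≤ 0 := by
    calc (C.2 - D.2) * (A.2 - B.2) = (B.2 - A.2) * (D.2 - C.2) := by ring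
    _ ≤ 0 := hstep2
  have hsr : sq * (A.2 - B.2) ≤ 0 := by
    by_cases hs0 : A.2 - B.2 = 0
    · rw [hs0]; simp
    · rw [sign_mul_neg hsq hqs hsqq hq0' hs0]
      have := abs_nonneg (A.2 - B.2); omega
  by_cases hs0 : B.2 - A.2 = 0
  · -- s = 0 : vertical probe V1 = (B.1, B.2 + σr)
    have hr0 : B.1 - A.1 ≠ 0 := fun h => hABne ⟨h, hs0⟩
    obtain ⟨σr, hσr, hσrr⟩ := exists_sign hr0
    have hσb : -1 ≤ σr ∧ σr ≤ 1 := by rcases hσr with rfl | rfl <;> norm_num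
    have hpσ1 : σr * (D.1 - C.1) ≤ 0 ∧ -|D.1 - C.1| ≤ σr * (D.1 - C.1) := by
      by_cases hp0 : D.1 - C.1 = 0
      · rw [hp0]; simp
      · rw [sign_mul_neg hσr hstep1 hσrr hr0 hp0]
        exact ⟨by have := abs_nonneg (D.1 - C.1); omega, le_rfl⟩
    have hV1AB : dl A B (B.1 + 0, B.2 + σr) = |B.1 - A.1| := by
      rw [dlAB_B]
      have : (B.1 - A.1) * σr - (B.2 - A.2) * 0 = σr * (B.1 - A.1) := by ring
      rw [this, hσrr]
    have hV1CD : dl C D (B.1 + 0, B.2 + σr) = dl C D B + σr * (D.1 - C.1) := by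
      rw [dlCD_B]; ring_nf
    have hV1CDa : 1 ≤ dl C D (B.1 + 0, B.2 + σr) := by rw [hV1CD]; omega
    have hV1CDb : dl C D (B.1 + 0, B.2 + σr) ≤ dl C D B := by rw [hV1CD]; omega
    by_cases hV1g : ((B.1 + 0, B.2 + σr) : ℤ × ℤ) ∈ Grid m n
    · have hδeq : detZ (B - A) (D - C) = (B.1 - A.1) * (D.2 - C.2) := by
        have : detZ (B - A) (D - C) =
            (B.1 - A.1) * (D.2 - C.2) - (B.2 - A.2) * (D.1 - C.1) := rfl
        rw [this, hs0]; ring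
      have halign : 0 ≤ sq * (-(detZ (B - A) (D - C))) * ((B.1 + 0, B.2 + σr).2 - B.2) := by
        have h1 : sq * (-(detZ (B - A) (D - C))) * ((B.2 + σr) - B.2) =
            (sq * (C.2 - D.2)) * (σr * (B.1 - A.1)) := by rw [hδeq]; ring
        simp only at h1 ⊢
        rw [h1, hsqq, hσrr]
        exact mul_nonneg (abs_nonneg _) (abs_nonneg _)
      rcases le_or_gt 0 (sq * (-(detZ (B - A) (D - C)))) with hd | hd
      · exact ML2y hbnd B (B.1 + 0, B.2 + σr) (dl C D B) 1 sq hsq (Or.inl rfl)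
          (by rw [hsqq, habs]; exact hq1le) hp1' hp2' hsr dlAB_other halign (by simpa using hd)
          (Or.inl hδ0) (by rw [hsqq, habs]; omega) le_rfl hV1g
          (segTrue_of_strict (by rw [hV1AB]; exact one_le_abs' hr0))
          (segTrue_of_strict hV1CDa) hV1CDa hV1CDb
      · exact ML2y hbnd B (B.1 + 0, B.2 + σr) (dl C D B) (-1) sq hsq (Or.inr rfl)
          (by rw [hsqq, habs]; exact hq1le) hp1' hp2' hsr dlAB_other halign (by nlinarith)
          (Or.inl hδ0) (by rw [hsqq, habs]; omega) le_rfl hV1g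
          (segTrue_of_strict (by rw [hV1AB]; exact one_le_abs' hr0))
          (segTrue_of_strict hV1CDa) hV1CDa hV1CDb
    · have hcoord : ¬(0 ≤ B.1 + 0 ∧ B.1 + 0 < (m : ℤ) ∧ 0 ≤ B.2 + σr ∧ B.2 + σr < (n : ℤ)) :=
        fun h => hV1g (grid_mem.mpr h)
      rcases hσr with rfl | rfl <;> omega
  · -- s ≠ 0 : horizontal probe P1 = (B.1 - σs, B.2)
    obtain ⟨σs, hσs, hσss⟩ := exists_sign hs0
    have hσb : -1 ≤ σs ∧ σs ≤ 1 := by rcases hσs with rfl | rfl <;> norm_num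
    have hqσs : σs * (D.2 - C.2) = -|D.2 - C.2| :=
      sign_mul_neg hσs hstep2 hσss hs0 hq0
    have hP1AB : dl A B (B.1 + -σs, B.2 + 0) = |B.2 - A.2| := by
      rw [dlAB_B]
      have : (B.1 - A.1) * 0 - (B.2 - A.2) * (-σs) = σs * (B.2 - A.2) := by ring
      rw [this, hσss]
    have hP1CD : dl C D (B.1 + -σs, B.2 + 0) = dl C D B - |D.2 - C.2| := by
      rw [dlCD_B]
      have : dl C D B + ((D.1 - C.1) * 0 - (D.2 - C.2) * (-σs)) =
          dl C D B + σs * (D.2 - C.2) := by ring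
      rw [this, hqσs]; ring
    by_cases hP1g : ((B.1 + -σs, B.2 + 0) : ℤ × ℤ) ∈ Grid m n
    · rcases le_or_gt 0 (sq * (-(detZ (B - A) (D - C)))) with hd | hd
      · exact ML2y hbnd B (B.1 + -σs, B.2 + 0) (dl C D B) 1 sq hsq (Or.inl rfl)
          (by rw [hsqq, habs]; exact hq1le) hp1' hp2' hsr dlAB_other (by simp) (by simpa using hd)
          (Or.inl hδ0) (by rw [hsqq, habs]; omega) le_rfl hP1g
          (segTrue_of_strict (by rw [hP1AB]; exact one_le_abs' hs0))
          (segTrue_of_strict (by rw [hP1CD]; omega)) (by rw [hP1CD]; omega)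
          (by rw [hP1CD]; omega)
      · exact ML2y hbnd B (B.1 + -σs, B.2 + 0) (dl C D B) (-1) sq hsq (Or.inr rfl)
          (by rw [hsqq, habs]; exact hq1le) hp1' hp2' hsr dlAB_other (by simp) (by nlinarith)
          (Or.inl hδ0) (by rw [hsqq, habs]; omega) le_rfl hP1g
          (segTrue_of_strict (by rw [hP1AB]; exact one_le_abs' hs0))
          (segTrue_of_strict (by rw [hP1CD]; omega)) (by rw [hP1CD]; omega)
          (by rw [hP1CD]; omega)
    · -- B.1 is on a vertical edge
      have hcoord : ¬(0 ≤ B.1 + -σs ∧ B.1 + -σs < (m : ℤ) ∧ 0 ≤ B.2 + 0 ∧ B.2 + 0 < (n : ℤ)) :=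
        fun h => hP1g (grid_mem.mpr h)
      by_cases hr0 : B.1 - A.1 = 0
      · rcases hσs with rfl | rfl <;> omega
      · obtain ⟨σr, hσr, hσrr⟩ := exists_sign hr0
        have hσrb : -1 ≤ σr ∧ σr ≤ 1 := by rcases hσr with rfl | rfl <;> norm_num
        have hr1 : 1 ≤ |B.1 - A.1| := one_le_abs' hr0
        have hs1 : 1 ≤ |B.2 - A.2| := one_le_abs' hs0
        -- facts about signs of r and s from σr σs
        have hrsgn : σr * (B.1 - A.1) = |B.1 - A.1| := hσrr
        have hssgn : σs * (B.2 - A.2) = |B.2 - A.2| := hσss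
        rcases hσr with rfl | rfl <;> rcases hσs with rfl | rfl
        · -- σr = 1, σs = 1 : r ≥ 1, B.1 = 0 : contradiction
          have : 1 ≤ B.1 - A.1 := by
            rcases lt_or_gt_of_ne hr0 with h | h
            · exfalso; rw [abs_of_neg h] at hrsgn; omega
            · omega
          omega
        · -- σr = 1, σs = -1 : s ≤ -1, B.1 = m-1 ; vertical probe up
          have hrpos : 1 ≤ B.1 - A.1 := by
            rcases lt_or_gt_of_ne hr0 with h | h
            · exfalso; rw [abs_of_neg h] at hrsgn; omega
            · omega
          have hsneg : B.2 - A.2 ≤ -1 := by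
            rcases lt_or_gt_of_ne hs0 with h | h
            · omega
            · exfalso; rw [abs_of_pos h] at hssgn; omega
          have hpσ1 : (D.1 - C.1) ≤ 0 ∧ -|D.1 - C.1| ≤ (D.1 - C.1) := by
            constructor
            · nlinarith [hstep1]
            · have := neg_abs_le (D.1 - C.1); omega
          have hV1AB : dl A B (B.1 + 0, B.2 + 1) = B.1 - A.1 := by
            rw [dlAB_B]; ring
          have hV1CD : dl C D (B.1 + 0, B.2 + 1) = dl C D B + (D.1 - C.1) := by
            rw [dlCD_B]; ring
          by_cases hV1g : ((B.1 + 0, B.2 + 1) : ℤ × ℤ) ∈ Grid m n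
          · obtain ⟨-, hc2, -, -⟩ := hbnd _ hV1g
              (segTrue_of_strict (by rw [hV1AB]; omega))
              (segTrue_of_strict (by rw [hV1CD]; omega))
            simp only at hc2
            omega
          · have hcoord2 : ¬(0 ≤ B.1 + 0 ∧ B.1 + 0 < (m : ℤ) ∧
                0 ≤ B.2 + 1 ∧ B.2 + 1 < (n : ℤ)) := fun h => hV1g (grid_mem.mpr h)
            omega
        · -- σr = -1, σs = 1 : r ≤ -1, B.1 = 0 ; vertical probe down
          have hrneg : B.1 - A.1 ≤ -1 := by
            rcases lt_or_gt_of_ne hr0 with h | h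
            · omega
            · exfalso; rw [abs_of_pos h] at hrsgn; omega
          have hspos : 1 ≤ B.2 - A.2 := by
            rcases lt_or_gt_of_ne hs0 with h | h
            · exfalso; rw [abs_of_neg h] at hssgn; omega
            · omega
          have hpσ1 : 0 ≤ (D.1 - C.1) ∧ (D.1 - C.1) ≤ |D.1 - C.1| := by
            constructor
            · nlinarith [hstep1]
            · exact le_abs_self _
          have hV1AB : dl A B (B.1 + 0, B.2 + -1) = -(B.1 - A.1) := by
            rw [dlAB_B]; ring
          have hV1CD : dl C D (B.1 + 0, B.2 + -1) = dl C D B - (D.1 - C.1) := by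
            rw [dlCD_B]; ring
          by_cases hV1g : ((B.1 + 0, B.2 + -1) : ℤ × ℤ) ∈ Grid m n
          · obtain ⟨hc1, -, -, -⟩ := hbnd _ hV1g
              (segTrue_of_strict (by rw [hV1AB]; omega))
              (segTrue_of_strict (by rw [hV1CD]; omega))
            simp only at hc1
            omega
          · have hcoord2 : ¬(0 ≤ B.1 + 0 ∧ B.1 + 0 < (m : ℤ) ∧
                0 ≤ B.2 + -1 ∧ B.2 + -1 < (n : ℤ)) := fun h => hV1g (grid_mem.mpr h)
            omega
        · -- σr = -1, σs = -1 : r ≤ -1, B.1 = m-1 : contradiction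
          have : B.1 - A.1 ≤ -1 := by
            rcases lt_or_gt_of_ne hr0 with h | h
            · omega
            · exfalso; rw [abs_of_pos h] at hrsgn; omega
          omega


lemma keyB
    (hAg : A ∈ Grid m n) (hBg : B ∈ Grid m n)
    (hprAB : PrimeSeg A B) (hprCD : PrimeSeg C D)
    (hCDA : SegTrue C D A) (hCDB : SegTrue C D B)
    (hbnd : ∀ X : ℤ × ℤ, X ∈ Grid m n → SegTrue A B X → SegTrue C D X →
      1 ≤ X.1 ∧ X.1 ≤ (m : ℤ) - 2 ∧ 1 ≤ X.2 ∧ X.2 ≤ (n : ℤ) - 2) :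
    dl C D B ≤ max |D.1 - C.1| |D.2 - C.2| := by
  have hABne := prodne_of_prime hprAB
  have hCDne := prodne_of_prime hprCD
  have hABA : SegTrue A B A := segTrue_self hprAB
  obtain ⟨hAx1, hAx2, hAy1, hAy2⟩ := hbnd A hAg hABA hCDA
  have hA0 : 0 ≤ dl C D A := dl_nonneg_of_segTrue hCDA
  have hstep1 := keyStep1 hAg hprAB hCDA hbnd
  have hstep2 := keyStep2 hAg hprAB hCDA hbnd
  have hgoalA := keyA hAg hprAB hprCD hCDA hbnd
  have hdelta : dl C D B = dl C D A - detZ (B - A) (D - C) := dl_delta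
  obtain ⟨hB1, hB2, hB3, hB4⟩ := hBg
  by_contra hcon
  push_neg at hcon
  have hmax1 : |D.1 - C.1| + 1 ≤ dl C D B := by
    have := le_max_left |D.1 - C.1| |D.2 - C.2|; omega
  have hmax2 : |D.2 - C.2| + 1 ≤ dl C D B := by
    have := le_max_right |D.1 - C.1| |D.2 - C.2|; omega
  have hδneg : detZ (B - A) (D - C) ≤ -1 := by omega
  have hδ0 : detZ (B - A) (D - C) ≠ 0 := by omega
  by_cases hpq : |D.2 - C.2| ≤ |D.1 - C.1|
  · exact keyBbranchX hbnd hABne hCDne hstep1 hstep2 hδ0 hmax1 hmax2 hB1 hB2 hB3 hB4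
      hAx1 hAx2 hAy1 hAy2 hpq
  · exact keyBbranchY hbnd hABne hCDne hstep1 hstep2 hδ0 hmax1 hmax2 hB1 hB2 hB3 hB4
      hAx1 hAx2 hAy1 hAy2 hpq

end KeyMain


section Dist

lemma sq_le_of_bound {C D P : ℤ × ℤ} (h0 : 0 ≤ dl C D P)
    (hle : dl C D P ≤ max |D.1 - C.1| |D.2 - C.2|) :
    (dl C D P) ^ 2 ≤ (D.1 - C.1) ^ 2 + (D.2 - C.2) ^ 2 := by
  rcases max_cases |D.1 - C.1| |D.2 - C.2| with ⟨hm, -⟩ | ⟨hm, -⟩ <;> rw [hm] at hle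
  · nlinarith [sq_abs (D.1 - C.1), abs_nonneg (D.1 - C.1), sq_nonneg (D.2 - C.2)]
  · nlinarith [sq_abs (D.2 - C.2), abs_nonneg (D.2 - C.2), sq_nonneg (D.1 - C.1)]

lemma infDist_le_one_of_sq {C D P : ℤ × ℤ}
    (hCD : ¬(D.1 - C.1 = 0 ∧ D.2 - C.2 = 0))
    (hsq : (dl C D P) ^ 2 ≤ (D.1 - C.1) ^ 2 + (D.2 - C.2) ^ 2) :
    Metric.infDist (ptE P) (affineSpan ℝ {ptE C, ptE D} : Set (EuclideanSpace ℝ (Fin 2))) ≤ 1 := by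
  set p : ℝ := ((D.1 - C.1 : ℤ) : ℝ) with hp
  set q : ℝ := ((D.2 - C.2 : ℤ) : ℝ) with hq
  set α : ℝ := ((P.1 - C.1 : ℤ) : ℝ) with hα
  set β : ℝ := ((P.2 - C.2 : ℤ) : ℝ) with hβ
  have hS : 0 < p ^ 2 + q ^ 2 := by
    rcases not_and_or.1 hCD with h | h
    · have h1 : (1 : ℤ) ≤ (D.1 - C.1) ^ 2 := by
        rcases lt_or_gt_of_ne h with h' | h' <;> nlinarith
      have h2 : (1 : ℝ) ≤ p ^ 2 := by rw [hp]; exact_mod_cast h1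
      nlinarith [sq_nonneg q]
    · have h1 : (1 : ℤ) ≤ (D.2 - C.2) ^ 2 := by
        rcases lt_or_gt_of_ne h with h' | h' <;> nlinarith
      have h2 : (1 : ℝ) ≤ q ^ 2 := by rw [hq]; exact_mod_cast h1
      nlinarith [sq_nonneg p]
  have hdetR : p * β - q * α = ((dl C D P : ℤ) : ℝ) := by
    rw [hp, hq, hα, hβ]
    simp only [dl, detZ, Prod.fst_sub, Prod.snd_sub]
    push_cast
    ring
  have hsqR : (p * β - q * α) ^ 2 ≤ p ^ 2 + q ^ 2 := by
    rw [hdetR, hp, hq]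
    exact_mod_cast hsq
  set t : ℝ := (p * α + q * β) / (p ^ 2 + q ^ 2) with ht
  set Y : EuclideanSpace ℝ (Fin 2) := AffineMap.lineMap (ptE C) (ptE D) t with hY
  have hmem : Y ∈ (affineSpan ℝ {ptE C, ptE D} : Set (EuclideanSpace ℝ (Fin 2))) :=
    AffineMap.lineMap_mem_affineSpan_pair t (ptE C) (ptE D)
  have hle : Metric.infDist (ptE P) (affineSpan ℝ {ptE C, ptE D} : Set (EuclideanSpace ℝ (Fin 2))) ≤ dist (ptE P) Y :=
    Metric.infDist_le_dist_of_mem hmem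
  refine le_trans hle ?_
  have hY0 : Y 0 = ptE C 0 + t * (ptE D 0 - ptE C 0) := by
    rw [hY]
    simp [AffineMap.lineMap_apply, PiLp.add_apply, PiLp.smul_apply, PiLp.sub_apply]
    ring
  have hY1 : Y 1 = ptE C 1 + t * (ptE D 1 - ptE C 1) := by
    rw [hY]
    simp [AffineMap.lineMap_apply, PiLp.add_apply, PiLp.smul_apply, PiLp.sub_apply]
    ring
  have hdist : dist (ptE P) Y = Real.sqrt ((ptE P 0 - Y 0) ^ 2 + (ptE P 1 - Y 1) ^ 2) := by
    rw [EuclideanSpace.dist_eq]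
    congr 1
    rw [Fin.sum_univ_two]
    simp [Real.dist_eq, sq_abs]
  rw [hdist]
  have hPC0 : ptE P 0 - ptE C 0 = α := by simp [ptE, hα]
  have hPC1 : ptE P 1 - ptE C 1 = β := by simp [ptE, hβ]
  have hDC0 : ptE D 0 - ptE C 0 = p := by simp [ptE, hp]
  have hDC1 : ptE D 1 - ptE C 1 = q := by simp [ptE, hq]
  have hv0 : ptE P 0 - Y 0 = α - t * p := by rw [hY0, hDC0]; linarith [hPC0]
  have hv1 : ptE P 1 - Y 1 = β - t * q := by rw [hY1, hDC1]; linarith [hPC1]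
  rw [hv0, hv1]
  have hval : (α - t * p) ^ 2 + (β - t * q) ^ 2 = (p * β - q * α) ^ 2 / (p ^ 2 + q ^ 2) := by
    rw [ht]
    field_simp
    ring
  rw [hval]
  have h1 : (p * β - q * α) ^ 2 / (p ^ 2 + q ^ 2) ≤ 1 := by
    rw [div_le_one hS]
    exact hsqR
  calc Real.sqrt ((p * β - q * α) ^ 2 / (p ^ 2 + q ^ 2)) ≤ Real.sqrt 1 :=
        Real.sqrt_le_sqrt h1
    _ = 1 := Real.sqrt_one

end Dist


/-- if a proper pair defines a 2-threshold function with no true points on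
the boundary of the grid, then A and B are at Euclidean distance at most 1 from the line
through C and D. -/
theorem proper_pair_distance_le_one (m n : ℕ) (A B C D : ℤ × ℤ)
    (hpair : ProperPair m n A B C D)
    (hbnd : ∀ X : ℤ × ℤ, X ∈ Grid m n → SegTrue A B X → SegTrue C D X →
      1 ≤ X.1 ∧ X.1 ≤ (m : ℤ) - 2 ∧ 1 ≤ X.2 ∧ X.2 ≤ (n : ℤ) - 2) :
    Metric.infDist (ptE A) (affineSpan ℝ {ptE C, ptE D} : Set (EuclideanSpace ℝ (Fin 2))) ≤ 1 ∧
    Metric.infDist (ptE B) (affineSpan ℝ {ptE C, ptE D} : Set (EuclideanSpace ℝ (Fin 2))) ≤ 1 := by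
  obtain ⟨hAg, hBg, hCg, hDg, hprAB, hprCD, hCDA, hCDB, hABC, hABD⟩ := hpair
  have hCDne := prodne_of_prime hprCD
  have hA0 : 0 ≤ dl C D A := dl_nonneg_of_segTrue hCDA
  have hB0 : 0 ≤ dl C D B := dl_nonneg_of_segTrue hCDB
  have hkA := keyA hAg hprAB hprCD hCDA hbnd
  have hkB := keyB hAg hBg hprAB hprCD hCDA hCDB hbnd
  exact ⟨infDist_le_one_of_sq hCDne (sq_le_of_bound hA0 hkA),
    infDist_le_one_of_sq hCDne (sq_le_of_bound hB0 hkB)⟩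
end

section
/- There is an absolute constant K such that for all integers m, n ≥ 2, the number of proper pairs of oriented segments (→AB, →CD) in 𝒢_{m,n} for which the function f_{→AB} ∧ f_{→CD} has no true points on the boundary of 𝒢_{m,n} is at most K·m²n²(m+n)². -/
open scoped Real

namespace CPPNB

/-- Weak badness: no boundary lattice point lies strictly inside both half-planes. -/
def BadW (m n : ℕ) (u v A C : ℤ × ℤ) : Prop :=
  ∀ X ∈ GridBoundary m n, ¬(0 < detZ u (X - A) ∧ 0 < detZ v (X - C))

lemma mem_grid {m n : ℕ} {X : ℤ × ℤ}
    (h1 : 0 ≤ X.1) (h2 : X.1 ≤ (m : ℤ) - 1) (h3 : 0 ≤ X.2) (h4 : X.2 ≤ (n : ℤ) - 1) :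
    X ∈ Grid m n := ⟨h1, by omega, h3, by omega⟩

lemma mem_bdry {m n : ℕ} {X : ℤ × ℤ}
    (h1 : 0 ≤ X.1) (h2 : X.1 ≤ (m : ℤ) - 1) (h3 : 0 ≤ X.2) (h4 : X.2 ≤ (n : ℤ) - 1)
    (h5 : X.1 = 0 ∨ X.1 = (m : ℤ) - 1 ∨ X.2 = 0 ∨ X.2 = (n : ℤ) - 1) :
    X ∈ GridBoundary m n := ⟨mem_grid h1 h2 h3 h4, h5⟩

/-- Sign lemma: the two directions must have componentwise opposite (or zero) signs. -/
lemma signs {m n : ℕ} {u v A C : ℤ × ℤ}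
    (hA1 : 1 ≤ A.1) (hA2 : A.1 ≤ (m:ℤ) - 2) (hA3 : 1 ≤ A.2) (hA4 : A.2 ≤ (n:ℤ) - 2)
    (hr : 0 ≤ detZ v (A - C))
    (hbad : BadW m n u v A C) :
    (u.1 ≤ 0 ∨ v.1 ≤ 0) ∧ (0 ≤ u.1 ∨ 0 ≤ v.1) ∧ (u.2 ≤ 0 ∨ v.2 ≤ 0) ∧ (0 ≤ u.2 ∨ 0 ≤ v.2) := by
  refine ⟨?_, ?_, ?_, ?_⟩
  · by_contra h
    push_neg at h
    obtain ⟨h1, h2⟩ := h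
    have hX : ((A.1 : ℤ), ((n:ℤ) - 1)) ∈ GridBoundary m n :=
      mem_bdry (by omega) (by omega) (by omega) (by omega) (by omega)
    refine hbad _ hX ⟨?_, ?_⟩
    · have e : detZ u ((A.1, (n:ℤ)-1) - A) = u.1 * ((n:ℤ) - 1 - A.2) := by simp [detZ]
      rw [e]; nlinarith
    · have e : detZ v ((A.1, (n:ℤ)-1) - C) = detZ v (A - C) + v.1 * ((n:ℤ)-1-A.2) := by
        simp [detZ]; try ring
      rw [e]; nlinarith
  · by_contra h
    push_neg at h
    obtain ⟨h1, h2⟩ := h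
    have hX : ((A.1 : ℤ), (0:ℤ)) ∈ GridBoundary m n :=
      mem_bdry (by omega) (by omega) (by omega) (by omega) (by omega)
    refine hbad _ hX ⟨?_, ?_⟩
    · have e : detZ u ((A.1, (0:ℤ)) - A) = (-u.1) * A.2 := by simp [detZ]; try ring
      rw [e]; nlinarith
    · have e : detZ v ((A.1, (0:ℤ)) - C) = detZ v (A - C) + (-v.1) * A.2 := by
        simp [detZ]; try ring
      rw [e]; nlinarith
  · by_contra h
    push_neg at h
    obtain ⟨h1, h2⟩ := h
    have hX : ((0 : ℤ), A.2) ∈ GridBoundary m n :=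
      mem_bdry (by omega) (by omega) (by omega) (by omega) (by omega)
    refine hbad _ hX ⟨?_, ?_⟩
    · have e : detZ u (((0:ℤ), A.2) - A) = u.2 * A.1 := by simp [detZ]; try ring
      rw [e]; nlinarith
    · have e : detZ v (((0:ℤ), A.2) - C) = detZ v (A - C) + v.2 * A.1 := by
        simp [detZ]; try ring
      rw [e]; nlinarith
  · by_contra h
    push_neg at h
    obtain ⟨h1, h2⟩ := h
    have hX : (((m:ℤ) - 1 : ℤ), A.2) ∈ GridBoundary m n :=
      mem_bdry (by omega) (by omega) (by omega) (by omega) (by omega)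
    refine hbad _ hX ⟨?_, ?_⟩
    · have e : detZ u ((((m:ℤ)-1 : ℤ), A.2) - A) = (-u.2) * ((m:ℤ)-1-A.1) := by
        simp [detZ]; try ring
      rw [e]; nlinarith
    · have e : detZ v ((((m:ℤ)-1 : ℤ), A.2) - C) = detZ v (A - C) + (-v.2) * ((m:ℤ)-1-A.1) := by
        simp [detZ]; try ring
      rw [e]; nlinarith

end CPPNB
namespace CPPNB

/-- Left-exit wedge lemma. -/
lemma sub_left {m n : ℕ} {u v A C : ℤ × ℤ}
    (hbad : BadW m n u v A C)
    (hu1 : 1 ≤ u.1) (hv1 : v.1 ≤ 0) (ht : 1 ≤ detZ u v)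
    (hD1 : 1 ≤ C.1 + v.1)
    (hM0 : 0 ≤ (C.2 + v.2) * u.1 - (C.1 + v.1) * u.2)
    (hM1 : (C.2 + v.2) * u.1 - (C.1 + v.1) * u.2 ≤ ((n:ℤ) - 1) * u.1)
    (hm1 : (1:ℤ) ≤ (m:ℤ)) :
    detZ u (C + v - A) ≤ u.1 := by
  set M := (C.2 + v.2) * u.1 - (C.1 + v.1) * u.2 with hM
  set k := M / u.1 with hk
  have hu1' : (0:ℤ) < u.1 := hu1
  have hdm : u.1 * k + M % u.1 = M := Int.mul_ediv_add_emod M u.1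
  have hr0 : 0 ≤ M % u.1 := Int.emod_nonneg M (by omega)
  have hr1 : M % u.1 < u.1 := Int.emod_lt_of_pos M hu1'
  have hk0 : 0 ≤ k := Int.ediv_nonneg hM0 (le_of_lt hu1')
  have hkn : k ≤ (n:ℤ) - 1 := by
    by_contra hc
    push_neg at hc
    have : ((n:ℤ) - 1) * u.1 < k * u.1 := by
      apply mul_lt_mul_of_pos_right _ hu1'
      omega
    nlinarith
  have hX : ((0:ℤ), k) ∈ GridBoundary m n :=
    mem_bdry (le_refl 0) (by omega) hk0 hkn (Or.inl rfl)
  have hrw : M % u.1 = M - u.1 * k := by omega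
  have hβ : u.1 * detZ v (((0:ℤ), k) - C)
      = (C.1 + v.1) * detZ u v + (-v.1) * (M % u.1) := by
    rw [hrw, hM]; simp [detZ]; ring
  have hβpos : 0 < detZ v (((0:ℤ), k) - C) := by
    by_contra hb
    push_neg at hb
    nlinarith [mul_pos (show (0:ℤ) < C.1 + v.1 by omega) (show (0:ℤ) < detZ u v by omega),
      mul_nonneg (show (0:ℤ) ≤ -v.1 by omega) hr0,
      mul_nonpos_of_nonneg_of_nonpos (le_of_lt hu1') hb]
  have hα : detZ u (((0:ℤ), k) - A) = detZ u (C + v - A) - (M % u.1) := by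
    rw [hrw, hM]; simp [detZ]; ring
  have hnb := hbad _ hX
  rw [not_and] at hnb
  have hαle : ¬ (0 < detZ u (((0:ℤ), k) - A)) := fun hp => (hnb hp) hβpos
  push_neg at hαle
  rw [hα] at hαle
  omega

/-- Bottom-exit wedge lemma. -/
lemma sub_bottom {m n : ℕ} {u v A C : ℤ × ℤ}
    (hbad : BadW m n u v A C)
    (hu2 : 1 ≤ u.2) (hv2 : v.2 ≤ 0) (ht : 1 ≤ detZ u v)
    (hD2 : 1 ≤ C.2 + v.2)
    (hN0 : 0 ≤ (C.1 + v.1) * u.2 - (C.2 + v.2) * u.1)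
    (hN1 : (C.1 + v.1) * u.2 - (C.2 + v.2) * u.1 < ((m:ℤ) - 1) * u.2)
    (hn1 : (1:ℤ) ≤ (n:ℤ)) :
    detZ u (C + v - A) ≤ u.2 := by
  set N := (C.1 + v.1) * u.2 - (C.2 + v.2) * u.1 with hN
  set k := N / u.2 with hk
  have hu2' : (0:ℤ) < u.2 := hu2
  have hdm : u.2 * k + N % u.2 = N := Int.mul_ediv_add_emod N u.2
  have hr0 : 0 ≤ N % u.2 := Int.emod_nonneg N (by omega)
  have hr1 : N % u.2 < u.2 := Int.emod_lt_of_pos N hu2'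
  have hk0 : 0 ≤ k := Int.ediv_nonneg hN0 (le_of_lt hu2')
  have hkm : k + 1 ≤ (m:ℤ) - 1 := by
    by_contra hc
    push_neg at hc
    have : ((m:ℤ) - 2) * u.2 < k * u.2 := by
      apply mul_lt_mul_of_pos_right _ hu2'
      omega
    nlinarith
  have hX : ((k + 1 : ℤ), (0:ℤ)) ∈ GridBoundary m n :=
    mem_bdry (by omega) hkm (le_refl 0) (by omega) (Or.inr (Or.inr (Or.inl rfl)))
  have hrw : N % u.2 = N - u.2 * k := by omega
  have hβ : u.2 * detZ v (((k + 1 : ℤ), (0:ℤ)) - C)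
      = (C.2 + v.2) * detZ u v + (-v.2) * (u.2 - N % u.2) := by
    rw [hrw, hN]; simp [detZ]; ring
  have hβpos : 0 < detZ v (((k + 1 : ℤ), (0:ℤ)) - C) := by
    by_contra hb
    push_neg at hb
    nlinarith [mul_pos (show (0:ℤ) < C.2 + v.2 by omega) (show (0:ℤ) < detZ u v by omega),
      mul_nonneg (show (0:ℤ) ≤ -v.2 by omega) (show (0:ℤ) ≤ u.2 - N % u.2 by omega),
      mul_nonpos_of_nonneg_of_nonpos (le_of_lt hu2') hb]
  have hα : detZ u (((k + 1 : ℤ), (0:ℤ)) - A)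
      = detZ u (C + v - A) + (N % u.2) - u.2 := by
    rw [hrw, hN]; simp [detZ]; ring
  have hnb := hbad _ hX
  rw [not_and] at hnb
  have hαle : ¬ (0 < detZ u (((k + 1 : ℤ), (0:ℤ)) - A)) := fun hp => (hnb hp) hβpos
  push_neg at hαle
  rw [hα] at hαle
  omega

/-- Top-exit wedge lemma. -/
lemma sub_top {m n : ℕ} {u v A C : ℤ × ℤ}
    (hbad : BadW m n u v A C)
    (hu2 : u.2 ≤ -1) (hv2 : 0 ≤ v.2) (ht : 1 ≤ detZ u v)
    (hD2 : C.2 + v.2 ≤ (n:ℤ) - 2)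
    (hN0 : 0 ≤ (C.1 + v.1) * (-u.2) - ((n:ℤ) - 1 - (C.2 + v.2)) * u.1)
    (hN1 : (C.1 + v.1) * (-u.2) - ((n:ℤ) - 1 - (C.2 + v.2)) * u.1 ≤ ((m:ℤ) - 1) * (-u.2))
    (hn1 : (1:ℤ) ≤ (n:ℤ)) :
    detZ u (C + v - A) ≤ -u.2 := by
  set N := (C.1 + v.1) * (-u.2) - ((n:ℤ) - 1 - (C.2 + v.2)) * u.1 with hN
  set k := N / (-u.2) with hk
  have hu2' : (0:ℤ) < -u.2 := by omega
  have hdm : (-u.2) * k + N % (-u.2) = N := Int.mul_ediv_add_emod N (-u.2)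
  have hr0 : 0 ≤ N % (-u.2) := Int.emod_nonneg N (by omega)
  have hr1 : N % (-u.2) < -u.2 := Int.emod_lt_of_pos N hu2'
  have hk0 : 0 ≤ k := Int.ediv_nonneg hN0 (le_of_lt hu2')
  have hkm : k ≤ (m:ℤ) - 1 := by
    by_contra hc
    push_neg at hc
    have : ((m:ℤ) - 1) * (-u.2) < k * (-u.2) := by
      apply mul_lt_mul_of_pos_right _ hu2'
      omega
    nlinarith
  have hX : ((k : ℤ), ((n:ℤ) - 1)) ∈ GridBoundary m n :=
    mem_bdry hk0 hkm (by omega) (by omega) (Or.inr (Or.inr (Or.inr rfl)))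
  have hrw : N % (-u.2) = N - (-u.2) * k := by omega
  have hβ : (-u.2) * detZ v (((k : ℤ), ((n:ℤ) - 1)) - C)
      = ((n:ℤ) - 1 - (C.2 + v.2)) * detZ u v + v.2 * (N % (-u.2)) := by
    rw [hrw, hN]; simp [detZ]; ring
  have hβpos : 0 < detZ v (((k : ℤ), ((n:ℤ) - 1)) - C) := by
    by_contra hb
    push_neg at hb
    nlinarith [mul_pos (show (0:ℤ) < (n:ℤ) - 1 - (C.2 + v.2) by omega)
        (show (0:ℤ) < detZ u v by omega),
      mul_nonneg hv2 hr0,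
      mul_nonpos_of_nonneg_of_nonpos (le_of_lt hu2') hb]
  have hα : detZ u (((k : ℤ), ((n:ℤ) - 1)) - A)
      = detZ u (C + v - A) - (N % (-u.2)) := by
    rw [hrw, hN]; simp [detZ]; ring
  have hnb := hbad _ hX
  rw [not_and] at hnb
  have hαle : ¬ (0 < detZ u (((k : ℤ), ((n:ℤ) - 1)) - A)) := fun hp => (hnb hp) hβpos
  push_neg at hαle
  rw [hα] at hαle
  omega

end CPPNB
namespace CPPNB

/-- D sits on the left edge: `D = (0, D₂)`. -/
lemma adhoc_D1zero {m n : ℕ} {u v A C : ℤ × ℤ}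
    (hbad : BadW m n u v A C)
    (hC1 : 1 ≤ C.1) (hzero : C.1 + v.1 = 0)
    (hD2a : 1 ≤ C.2 + v.2) (hD2b : C.2 + v.2 ≤ (n:ℤ) - 1)
    (hm1 : (1:ℤ) ≤ (m:ℤ)) :
    detZ u (C + v - A) ≤ u.1 := by
  have hv1 : v.1 = -C.1 := by omega
  have hX : ((0:ℤ), C.2 + v.2 - 1) ∈ GridBoundary m n :=
    mem_bdry (le_refl 0) (by omega) (by omega) (by omega) (Or.inl rfl)
  have hβ : detZ v (((0:ℤ), C.2 + v.2 - 1) - C) = -v.1 := by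
    simp only [detZ, Prod.fst_sub, Prod.snd_sub]
    rw [hv1]; ring
  have hα : detZ u (((0:ℤ), C.2 + v.2 - 1) - A) = detZ u (C + v - A) - u.1 := by
    simp only [detZ, Prod.fst_sub, Prod.snd_sub, Prod.fst_add, Prod.snd_add]
    rw [hv1]; ring
  have hnb := hbad _ hX
  rw [not_and] at hnb
  have hβpos : 0 < detZ v (((0:ℤ), C.2 + v.2 - 1) - C) := by rw [hβ]; omega
  have hαle : ¬ (0 < detZ u (((0:ℤ), C.2 + v.2 - 1) - A)) := fun hp => (hnb hp) hβpos
  push_neg at hαle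
  rw [hα] at hαle
  omega

/-- D sits on the bottom edge: `D = (D₁, 0)`. -/
lemma adhoc_bottomedge {m n : ℕ} {u v A C : ℤ × ℤ}
    (hbad : BadW m n u v A C)
    (hC3 : 1 ≤ C.2) (hzero : C.2 + v.2 = 0)
    (hC2 : C.1 ≤ (m:ℤ) - 2) (hv1 : v.1 ≤ 0) (hD1 : 0 ≤ C.1 + v.1)
    (hn1 : (1:ℤ) ≤ (n:ℤ)) :
    detZ u (C + v - A) ≤ u.2 := by
  have hv2 : v.2 = -C.2 := by omega
  have hX : ((C.1 + v.1 + 1 : ℤ), (0:ℤ)) ∈ GridBoundary m n :=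
    mem_bdry (by omega) (by omega) (le_refl 0) (by omega) (Or.inr (Or.inr (Or.inl rfl)))
  have hβ : detZ v (((C.1 + v.1 + 1 : ℤ), (0:ℤ)) - C) = C.2 := by
    simp only [detZ, Prod.fst_sub, Prod.snd_sub]
    rw [hv2]; ring
  have hα : detZ u (((C.1 + v.1 + 1 : ℤ), (0:ℤ)) - A) = detZ u (C + v - A) - u.2 := by
    simp only [detZ, Prod.fst_sub, Prod.snd_sub, Prod.fst_add, Prod.snd_add]
    rw [hv2]; ring
  have hnb := hbad _ hX
  rw [not_and] at hnb
  have hβpos : 0 < detZ v (((C.1 + v.1 + 1 : ℤ), (0:ℤ)) - C) := by rw [hβ]; omega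
  have hαle : ¬ (0 < detZ u (((C.1 + v.1 + 1 : ℤ), (0:ℤ)) - A)) := fun hp => (hnb hp) hβpos
  push_neg at hαle
  rw [hα] at hαle
  omega

/-- D sits on the top edge: `D = (D₁, n-1)`, `D₁ ≥ 1`. -/
lemma adhoc_topedge {m n : ℕ} {u v A C : ℤ × ℤ}
    (hbad : BadW m n u v A C)
    (hC4 : C.2 ≤ (n:ℤ) - 2) (hzero : C.2 + v.2 = (n:ℤ) - 1)
    (hD1a : 1 ≤ C.1 + v.1) (hD1b : C.1 + v.1 ≤ (m:ℤ) - 1)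
    (hn1 : (1:ℤ) ≤ (n:ℤ)) :
    detZ u (C + v - A) ≤ -u.2 := by
  have hv2 : v.2 = (n:ℤ) - 1 - C.2 := by omega
  have hX : ((C.1 + v.1 - 1 : ℤ), ((n:ℤ) - 1)) ∈ GridBoundary m n :=
    mem_bdry (by omega) (by omega) (by omega) (by omega) (Or.inr (Or.inr (Or.inr rfl)))
  have hβ : detZ v (((C.1 + v.1 - 1 : ℤ), ((n:ℤ) - 1)) - C) = v.2 := by
    simp only [detZ, Prod.fst_sub, Prod.snd_sub]
    rw [hv2]; ring
  have hα : detZ u (((C.1 + v.1 - 1 : ℤ), ((n:ℤ) - 1)) - A)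
      = detZ u (C + v - A) + u.2 := by
    simp only [detZ, Prod.fst_sub, Prod.snd_sub, Prod.fst_add, Prod.snd_add]
    rw [hv2]; ring
  have hnb := hbad _ hX
  rw [not_and] at hnb
  have hβpos : 0 < detZ v (((C.1 + v.1 - 1 : ℤ), ((n:ℤ) - 1)) - C) := by rw [hβ]; omega
  have hαle : ¬ (0 < detZ u (((C.1 + v.1 - 1 : ℤ), ((n:ℤ) - 1)) - A)) :=
    fun hp => (hnb hp) hβpos
  push_neg at hαle
  rw [hα] at hαle
  omega

/-- Two primitive parallel vectors are equal or opposite. -/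
lemma parallel_pm {u v : ℤ × ℤ} (hu : Int.gcd u.1 u.2 = 1) (hv : Int.gcd v.1 v.2 = 1)
    (h : detZ u v = 0) : v = u ∨ v = -u := by
  have h' : u.1 * v.2 = u.2 * v.1 := by
    simp only [detZ] at h; omega
  rcases eq_or_ne u.1 0 with h0 | h0
  · have hu2 : u.2 = 1 ∨ u.2 = -1 := by
      rw [h0] at hu
      have := Int.natAbs_eq_iff.mp (by simpa [Int.gcd] using hu)
      omega
    have hv1 : v.1 = 0 := by
      rcases hu2 with h2 | h2 <;> rw [h0, h2] at h' <;> omega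
    have hv2 : v.2 = 1 ∨ v.2 = -1 := by
      rw [hv1] at hv
      have := Int.natAbs_eq_iff.mp (by simpa [Int.gcd] using hv)
      omega
    rcases hu2 with h2 | h2 <;> rcases hv2 with h3 | h3
    · left; exact Prod.ext (by omega) (by omega)
    · right; exact Prod.ext (by simp; omega) (by simp; omega)
    · right; exact Prod.ext (by simp; omega) (by simp; omega)
    · left; exact Prod.ext (by omega) (by omega)
  · have hcop : IsCoprime u.1 u.2 := Int.isCoprime_iff_gcd_eq_one.mpr hu
    have hdvd : u.1 ∣ u.2 * v.1 := ⟨v.2, h'.symm⟩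
    have hv1 : u.1 ∣ v.1 := hcop.dvd_of_dvd_mul_left hdvd
    obtain ⟨c, hc⟩ := hv1
    have hv2 : v.2 = u.2 * c := by
      have : u.1 * v.2 = u.1 * (u.2 * c) := by rw [h']; rw [hc]; ring
      exact mul_left_cancel₀ h0 this
    have hgc : Int.gcd (u.1 * c) (u.2 * c) = 1 := by rw [← hc, ← hv2]; exact hv
    rw [Int.gcd_mul_right, hu, one_mul] at hgc
    have : c = 1 ∨ c = -1 := Int.natAbs_eq_iff.mp (by simpa using hgc)
    rcases this with h1 | h1
    · left; exact Prod.ext (by rw [hc, h1]; ring) (by rw [hv2, h1]; ring)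
    · right; exact Prod.ext (by rw [hc, h1]; simp) (by rw [hv2, h1]; simp)

end CPPNB
namespace CPPNB

/-- Strip case, u in the open first quadrant. -/
lemma strip_Q1 {m n : ℕ} {u A C : ℤ × ℤ}
    (hbad : BadW m n u (-u) A C)
    (hu1 : 1 ≤ u.1) (hu2 : 1 ≤ u.2)
    (hA1 : 1 ≤ A.1) (hA2 : A.1 ≤ (m:ℤ) - 2) (hA3 : 1 ≤ A.2) (hA4 : A.2 ≤ (n:ℤ) - 2) :
    detZ u (C - A) ≤ 2 * (u.1 + u.2) := by
  by_contra hp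
  push_neg at hp
  rcases le_or_gt 0 ((A.1 - 1) * u.2 - (A.2 + 1) * u.1) with hNN | hNN
  · set N := (A.1 - 1) * u.2 - (A.2 + 1) * u.1 with hN
    set k := N / u.2 with hk
    have hu2' : (0:ℤ) < u.2 := hu2
    have hdm : u.2 * k + N % u.2 = N := Int.mul_ediv_add_emod N u.2
    have hr0 : 0 ≤ N % u.2 := Int.emod_nonneg N (by omega)
    have hr1 : N % u.2 < u.2 := Int.emod_lt_of_pos N hu2'
    have hk0 : 0 ≤ k := Int.ediv_nonneg hNN (le_of_lt hu2')
    have hkm : k ≤ (m:ℤ) - 1 := by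
      by_contra hc
      push_neg at hc
      have h1 : ((m:ℤ) - 1) * u.2 < k * u.2 := by
        apply mul_lt_mul_of_pos_right _ hu2'
        omega
      have h2 : (A.2 + 1) * u.1 ≥ 1 := by
        have := mul_pos (show (0:ℤ) < A.2 + 1 by omega) hu1
        omega
      nlinarith
    have hX : ((k : ℤ), (0:ℤ)) ∈ GridBoundary m n :=
      mem_bdry hk0 hkm (le_refl 0) (by omega) (Or.inr (Or.inr (Or.inl rfl)))
    have hrw : N % u.2 = N - u.2 * k := by omega
    have hα : detZ u (((k : ℤ), (0:ℤ)) - A) = (u.1 + u.2) + N % u.2 := by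
      rw [hrw, hN]; simp [detZ]; ring
    have hβ : detZ (-u) (((k : ℤ), (0:ℤ)) - C)
        = detZ u (C - A) - detZ u (((k : ℤ), (0:ℤ)) - A) := by
      simp [detZ]; ring
    have hnb := hbad _ hX
    rw [not_and] at hnb
    have := hnb (by rw [hα]; omega)
    rw [hβ, hα] at this
    omega
  · set M := (A.2 + 1) * u.1 - (A.1 - 1) * u.2 with hM
    have hM1 : 1 ≤ M := by omega
    set j := M + u.1 - 1 with hj
    set k := j / u.1 with hk
    have hu1' : (0:ℤ) < u.1 := hu1
    have hdm : u.1 * k + j % u.1 = j := Int.mul_ediv_add_emod j u.1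
    have hr0 : 0 ≤ j % u.1 := Int.emod_nonneg j (by omega)
    have hr1 : j % u.1 < u.1 := Int.emod_lt_of_pos j hu1'
    have hk0 : 0 ≤ k := Int.ediv_nonneg (by omega) (le_of_lt hu1')
    have hkn : k ≤ (n:ℤ) - 1 := by
      by_contra hc
      push_neg at hc
      have h1 : ((n:ℤ) - 1) * u.1 < k * u.1 := by
        apply mul_lt_mul_of_pos_right _ hu1'
        omega
      have h2 : 0 ≤ (A.1 - 1) * u.2 := mul_nonneg (by omega) (by omega)
      nlinarith
    have hX : ((0:ℤ), (k : ℤ)) ∈ GridBoundary m n :=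
      mem_bdry (le_refl 0) (by omega) hk0 hkn (Or.inl rfl)
    have hα : detZ u (((0:ℤ), (k : ℤ)) - A) = (u.1 + u.2) + (u.1 * k - M) := by
      rw [hM]; simp [detZ]; ring
    have hβ : detZ (-u) (((0:ℤ), (k : ℤ)) - C)
        = detZ u (C - A) - detZ u (((0:ℤ), (k : ℤ)) - A) := by
      simp [detZ]; ring
    have hnb := hbad _ hX
    rw [not_and] at hnb
    have := hnb (by rw [hα]; omega)
    rw [hβ, hα] at this
    omega

/-- Strip case, u in the open fourth quadrant. -/
lemma strip_Q4 {m n : ℕ} {u A C : ℤ × ℤ}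
    (hbad : BadW m n u (-u) A C)
    (hu1 : 1 ≤ u.1) (hu2 : u.2 ≤ -1)
    (hA1 : 1 ≤ A.1) (hA2 : A.1 ≤ (m:ℤ) - 2) (hA3 : 1 ≤ A.2) (hA4 : A.2 ≤ (n:ℤ) - 2) :
    detZ u (C - A) ≤ 2 * (u.1 + -u.2) := by
  by_contra hp
  push_neg at hp
  rcases le_or_gt 0 ((A.1 + 1) * (-u.2) - ((n:ℤ) - 2 - A.2) * u.1) with hNN | hNN
  · set N := (A.1 + 1) * (-u.2) - ((n:ℤ) - 2 - A.2) * u.1 with hN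
    set k := N / (-u.2) with hk
    have hu2' : (0:ℤ) < -u.2 := by omega
    have hdm : (-u.2) * k + N % (-u.2) = N := Int.mul_ediv_add_emod N (-u.2)
    have hr0 : 0 ≤ N % (-u.2) := Int.emod_nonneg N (by omega)
    have hr1 : N % (-u.2) < -u.2 := Int.emod_lt_of_pos N hu2'
    have hk0 : 0 ≤ k := Int.ediv_nonneg hNN (le_of_lt hu2')
    have hkm : k ≤ (m:ℤ) - 1 := by
      by_contra hc
      push_neg at hc
      have h1 : ((m:ℤ) - 1) * (-u.2) < k * (-u.2) := by
        apply mul_lt_mul_of_pos_right _ hu2'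
        omega
      have h2 : 0 ≤ ((n:ℤ) - 2 - A.2) * u.1 := by
        apply mul_nonneg _ (by omega)
        omega
      nlinarith
    have hX : ((k : ℤ), ((n:ℤ) - 1)) ∈ GridBoundary m n :=
      mem_bdry hk0 hkm (by omega) (by omega) (Or.inr (Or.inr (Or.inr rfl)))
    have hrw : N % (-u.2) = N - (-u.2) * k := by omega
    have hα : detZ u (((k : ℤ), ((n:ℤ) - 1)) - A) = (u.1 + -u.2) - N % (-u.2) := by
      rw [hrw, hN]; simp [detZ]; ring
    have hβ : detZ (-u) (((k : ℤ), ((n:ℤ) - 1)) - C)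
        = detZ u (C - A) - detZ u (((k : ℤ), ((n:ℤ) - 1)) - A) := by
      simp [detZ]; ring
    have hnb := hbad _ hX
    rw [not_and] at hnb
    have := hnb (by rw [hα]; omega)
    rw [hβ, hα] at this
    omega
  · set W := (A.2 + 1) * u.1 + (A.1 + 1) * (-u.2) with hW
    have hW0 : 0 ≤ W := by
      have h2 : 0 ≤ (A.2 + 1) * u.1 := mul_nonneg (by omega) (by omega)
      have h3 : 0 ≤ (A.1 + 1) * (-u.2) := by
        apply mul_nonneg (by omega) (by omega)
      omega
    set k := W / u.1 with hk
    have hu1' : (0:ℤ) < u.1 := hu1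
    have hdm : u.1 * k + W % u.1 = W := Int.mul_ediv_add_emod W u.1
    have hr0 : 0 ≤ W % u.1 := Int.emod_nonneg W (by omega)
    have hr1 : W % u.1 < u.1 := Int.emod_lt_of_pos W hu1'
    have hk0 : 0 ≤ k := Int.ediv_nonneg hW0 (le_of_lt hu1')
    have hkn : k ≤ (n:ℤ) - 1 := by
      by_contra hc
      push_neg at hc
      have h1 : ((n:ℤ) - 1) * u.1 < k * u.1 := by
        apply mul_lt_mul_of_pos_right _ hu1'
        omega
      nlinarith
    have hX : ((0:ℤ), (k : ℤ)) ∈ GridBoundary m n :=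
      mem_bdry (le_refl 0) (by omega) hk0 hkn (Or.inl rfl)
    have hα : detZ u (((0:ℤ), (k : ℤ)) - A) = (u.1 + -u.2) - W % u.1 := by
      rw [show W % u.1 = W - u.1 * k by omega, hW]; simp [detZ]; ring
    have hβ : detZ (-u) (((0:ℤ), (k : ℤ)) - C)
        = detZ u (C - A) - detZ u (((0:ℤ), (k : ℤ)) - A) := by
      simp [detZ]; ring
    have hnb := hbad _ hX
    rw [not_and] at hnb
    have := hnb (by rw [hα]; omega)
    rw [hβ, hα] at this
    omega

/-- Strip case, u = (1,0). -/
lemma strip_ax1 {m n : ℕ} {u A C : ℤ × ℤ}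
    (hbad : BadW m n u (-u) A C)
    (hu1 : u.1 = 1) (hu2 : u.2 = 0)
    (hA3 : 1 ≤ A.2) (hA4 : A.2 ≤ (n:ℤ) - 2) (hm1 : (1:ℤ) ≤ (m:ℤ)) :
    detZ u (C - A) ≤ 1 := by
  by_contra hp
  push_neg at hp
  have hX : ((0:ℤ), A.2 + 1) ∈ GridBoundary m n :=
    mem_bdry (le_refl 0) (by omega) (by omega) (by omega) (Or.inl rfl)
  have hα : detZ u (((0:ℤ), A.2 + 1) - A) = 1 := by
    simp [detZ, hu1, hu2]
  have hβ : detZ (-u) (((0:ℤ), A.2 + 1) - C)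
      = detZ u (C - A) - detZ u (((0:ℤ), A.2 + 1) - A) := by
    simp [detZ]; ring
  have hnb := hbad _ hX
  rw [not_and] at hnb
  have := hnb (by rw [hα]; omega)
  rw [hβ, hα] at this
  omega

/-- Strip case, u = (0,1). -/
lemma strip_ax2 {m n : ℕ} {u A C : ℤ × ℤ}
    (hbad : BadW m n u (-u) A C)
    (hu1 : u.1 = 0) (hu2 : u.2 = 1)
    (hA1 : 1 ≤ A.1) (hA2 : A.1 ≤ (m:ℤ) - 2) (hn1 : (1:ℤ) ≤ (n:ℤ)) :
    detZ u (C - A) ≤ 1 := by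
  by_contra hp
  push_neg at hp
  have hX : ((A.1 - 1 : ℤ), (0:ℤ)) ∈ GridBoundary m n :=
    mem_bdry (by omega) (by omega) (le_refl 0) (by omega) (Or.inr (Or.inr (Or.inl rfl)))
  have hα : detZ u (((A.1 - 1 : ℤ), (0:ℤ)) - A) = 1 := by
    simp [detZ, hu1, hu2]
  have hβ : detZ (-u) (((A.1 - 1 : ℤ), (0:ℤ)) - C)
      = detZ u (C - A) - detZ u (((A.1 - 1 : ℤ), (0:ℤ)) - A) := by
    simp [detZ]; ring
  have hnb := hbad _ hX
  rw [not_and] at hnb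
  have := hnb (by rw [hα]; omega)
  rw [hβ, hα] at this
  omega

end CPPNB
namespace CPPNB

/-- Core geometric lemma (orientation-normalized version). -/
lemma glcore {m n : ℕ} {u v A C : ℤ × ℤ} (hm : 2 ≤ m) (hn : 2 ≤ n)
    (hu : Int.gcd u.1 u.2 = 1) (hv : Int.gcd v.1 v.2 = 1)
    (hA1 : 1 ≤ A.1) (hA2 : A.1 ≤ (m:ℤ) - 2) (hA3 : 1 ≤ A.2) (hA4 : A.2 ≤ (n:ℤ) - 2)
    (hC1 : 1 ≤ C.1) (hC2 : C.1 ≤ (m:ℤ) - 2) (hC3 : 1 ≤ C.2) (hC4 : C.2 ≤ (n:ℤ) - 2)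
    (hD : C + v ∈ Grid m n)
    (hr : 0 ≤ detZ v (A - C))
    (ht : 0 ≤ detZ u v)
    (hbad : BadW m n u v A C)
    (hupos : 1 ≤ u.1 ∨ (u.1 = 0 ∧ u.2 = 1)) :
    detZ u (C + v - A) ≤ 2 * (|u.1| + |u.2|) := by
  have hm' : (2:ℤ) ≤ (m:ℤ) := by exact_mod_cast hm
  have hn' : (2:ℤ) ≤ (n:ℤ) := by exact_mod_cast hn
  obtain ⟨hg1, hg2, hg3, hg4⟩ := hD
  simp only [Prod.fst_add, Prod.snd_add] at hg1 hg2 hg3 hg4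
  have hg2' : C.1 + v.1 ≤ (m:ℤ) - 1 := by omega
  have hg4' : C.2 + v.2 ≤ (n:ℤ) - 1 := by omega
  obtain ⟨hs1, hs2, hs3, hs4⟩ := signs hA1 hA2 hA3 hA4 hr hbad
  have habs : ∀ x : ℤ, x ≤ |x| ∧ -x ≤ |x| ∧ 0 ≤ |x| := fun x =>
    ⟨le_abs_self x, neg_le_abs x, abs_nonneg x⟩
  obtain ⟨hb1a, hb1b, hb1c⟩ := habs u.1
  obtain ⟨hb2a, hb2b, hb2c⟩ := habs u.2
  rcases ht.lt_or_eq with htpos | hteq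
  · -- wedge case, t ≥ 1
    have ht1 : 1 ≤ detZ u v := htpos
    rcases hupos with hU | ⟨hU1, hU2⟩
    · -- u.1 ≥ 1
      have hv1 : v.1 ≤ 0 := by omega
      rcases le_or_gt 0 u.2 with hu2sgn | hu2sgn
      case inr =>
        -- u.2 ≤ -1 : top-left exits
        have hv2 : 0 ≤ v.2 := by omega
        rcases eq_or_lt_of_le hg4' with hD2 | hD2
        · -- D2 = n - 1
          rcases le_or_gt 1 (C.1 + v.1) with hD1 | hD1
          · have := adhoc_topedge hbad hC4 hD2 hD1 hg2' (by omega)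
            omega
          · have hzero : C.1 + v.1 = 0 := by omega
            have := adhoc_D1zero hbad hC1 hzero (by omega) hg4' (by omega)
            omega
        · -- D2 ≤ n - 2
          have hD2' : C.2 + v.2 ≤ (n:ℤ) - 2 := by omega
          rcases le_or_gt 0 ((C.1 + v.1) * (-u.2) - ((n:ℤ) - 1 - (C.2 + v.2)) * u.1)
            with hN | hN
          · have hN1 : (C.1 + v.1) * (-u.2) - ((n:ℤ) - 1 - (C.2 + v.2)) * u.1
                ≤ ((m:ℤ) - 1) * (-u.2) := by
              have hx : (C.1 + v.1) * (-u.2) ≤ ((m:ℤ) - 1) * (-u.2) :=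
                mul_le_mul_of_nonneg_right hg2' (by omega)
              have hy : 0 ≤ ((n:ℤ) - 1 - (C.2 + v.2)) * u.1 :=
                mul_nonneg (by omega) (by omega)
              omega
            have := sub_top hbad (by omega) hv2 ht1 hD2' hN hN1 (by omega)
            omega
          · rcases le_or_gt 1 (C.1 + v.1) with hD1 | hD1
            · have hz : (C.1 + v.1) * u.2 = -((C.1 + v.1) * (-u.2)) := by ring
              have hx : 0 ≤ (C.2 + v.2) * u.1 := mul_nonneg (by omega) (by omega)
              have hy : 0 ≤ (C.1 + v.1) * (-u.2) := mul_nonneg (by omega) (by omega)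
              have hM0 : 0 ≤ (C.2 + v.2) * u.1 - (C.1 + v.1) * u.2 := by omega
              have he : ((n:ℤ) - 1 - (C.2 + v.2)) * u.1
                  = ((n:ℤ) - 1) * u.1 - (C.2 + v.2) * u.1 := by ring
              have hM1 : (C.2 + v.2) * u.1 - (C.1 + v.1) * u.2 ≤ ((n:ℤ) - 1) * u.1 := by
                omega
              have := sub_left hbad hU hv1 ht1 hD1 hM0 hM1 (by omega)
              omega
            · have hzero : C.1 + v.1 = 0 := by omega
              have hD2pos : 1 ≤ C.2 + v.2 := by omega
              have := adhoc_D1zero hbad hC1 hzero hD2pos hg4' (by omega)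
              omega
      rcases le_or_gt 1 (C.2 + v.2) with hD2 | hD2
      · -- D2 ≥ 1
        rcases le_or_gt 0 ((C.1 + v.1) * u.2 - (C.2 + v.2) * u.1) with hN | hN
        · -- bottom exit; first show u.2 ≥ 1
          have hu2pos : 1 ≤ u.2 := by
            rcases le_or_gt 1 u.2 with h | h
            · exact h
            · exfalso
              have h0 : u.2 ≤ 0 := by omega
              have hx : (C.1 + v.1) * u.2 ≤ 0 :=
                mul_nonpos_of_nonneg_of_nonpos (by omega) h0
              have hy : 1 ≤ (C.2 + v.2) * u.1 := by
                have := mul_pos (show (0:ℤ) < C.2 + v.2 by omega) (show (0:ℤ) < u.1 by omega)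
                omega
              omega
          have hv2 : v.2 ≤ 0 := by omega
          have hN1 : (C.1 + v.1) * u.2 - (C.2 + v.2) * u.1 < ((m:ℤ) - 1) * u.2 := by
            have hx : (C.1 + v.1) * u.2 ≤ ((m:ℤ) - 1) * u.2 :=
              mul_le_mul_of_nonneg_right hg2' (by omega)
            have hy : 1 ≤ (C.2 + v.2) * u.1 := by
              have := mul_pos (show (0:ℤ) < C.2 + v.2 by omega) (show (0:ℤ) < u.1 by omega)
              omega
            omega
          have := sub_bottom hbad hu2pos hv2 ht1 (by omega) hN hN1 (by omega)
          omega
        · -- left exit or D1 = 0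
          rcases le_or_gt 1 (C.1 + v.1) with hD1 | hD1
          · have hM0 : 0 ≤ (C.2 + v.2) * u.1 - (C.1 + v.1) * u.2 := by omega
            have hM1 : (C.2 + v.2) * u.1 - (C.1 + v.1) * u.2 ≤ ((n:ℤ) - 1) * u.1 := by
              have hx : (C.2 + v.2) * u.1 ≤ ((n:ℤ) - 1) * u.1 :=
                mul_le_mul_of_nonneg_right hg4' (by omega)
              have hy : 0 ≤ (C.1 + v.1) * u.2 := mul_nonneg (by omega) hu2sgn
              omega
            have := sub_left hbad hU hv1 ht1 hD1 hM0 hM1 (by omega)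
            omega
          · have hzero : C.1 + v.1 = 0 := by omega
            have := adhoc_D1zero hbad hC1 hzero hD2 hg4' (by omega)
            omega
      · -- D2 = 0
        have hzero : C.2 + v.2 = 0 := by omega
        have := adhoc_bottomedge hbad hC3 hzero hC2 hv1 hg1 (by omega)
        rcases le_or_gt 0 u.2 with h | h
        · omega
        · -- u.2 < 0 : conclusion q ≤ u.2 < 0 ≤ 2(|u1|+|u2|)
          omega
    · -- u = (0, 1)
      have hdet : detZ u v = -v.1 := by simp [detZ, hU1, hU2]
      have hv1 : v.1 ≤ -1 := by omega
      rcases le_or_gt 1 (C.2 + v.2) with hD2 | hD2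
      · have hv2 : v.2 ≤ 0 := by omega
        have hN : 0 ≤ (C.1 + v.1) * u.2 - (C.2 + v.2) * u.1 := by
          rw [hU2]; rw [hU1]; simp; omega
        have hN1 : (C.1 + v.1) * u.2 - (C.2 + v.2) * u.1 < ((m:ℤ) - 1) * u.2 := by
          rw [hU2]; rw [hU1]; simp; omega
        have := sub_bottom hbad (by omega) hv2 ht1 (by omega) hN hN1 (by omega)
        omega
      · have hzero : C.2 + v.2 = 0 := by omega
        have := adhoc_bottomedge hbad hC3 hzero hC2 (by omega) hg1 (by omega)
        omega
  · -- strip case, t = 0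
    have hpar : v = u ∨ v = -u := parallel_pm hu hv hteq.symm
    rcases hpar with hvu | hvu
    · exfalso
      rcases hupos with hU | ⟨hU1, hU2⟩
      · rw [hvu] at hs1; omega
      · rw [hvu] at hs3; omega
    · subst hvu
      have hpq : detZ u (C + -u - A) = detZ u (C - A) := by simp [detZ]; ring
      rw [hpq]
      rcases hupos with hU | ⟨hU1, hU2⟩
      · rcases lt_trichotomy u.2 0 with h2 | h2 | h2
        · have := strip_Q4 hbad hU (by omega) hA1 hA2 hA3 hA4
          omega
        · have hu1' : u.1 = 1 := by
            rw [h2] at hu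
            have := Int.natAbs_eq_iff.mp (by simpa [Int.gcd] using hu)
            omega
          have := strip_ax1 hbad hu1' h2 hA3 hA4 (by omega)
          omega
        · have := strip_Q1 hbad hU (by omega) hA1 hA2 hA3 hA4
          omega
      · have := strip_ax2 hbad hU1 hU2 hA1 hA2 (by omega)
        omega

end CPPNB
namespace CPPNB

/-- 180° rotation transport of weak badness. -/
lemma badw_rot {m n : ℕ} {u v A C : ℤ × ℤ} (hbad : BadW m n u v A C) :
    BadW m n (-u) (-v) ((m:ℤ) - 1 - A.1, (n:ℤ) - 1 - A.2) ((m:ℤ) - 1 - C.1, (n:ℤ) - 1 - C.2) := by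
  intro X hX h
  obtain ⟨⟨ha, hb, hc, hd⟩, he⟩ := hX
  have hY : (((m:ℤ) - 1 - X.1, (n:ℤ) - 1 - X.2) : ℤ × ℤ) ∈ GridBoundary m n :=
    mem_bdry (by omega) (by omega) (by omega) (by omega) (by omega)
  refine hbad _ hY ⟨?_, ?_⟩
  · have e : detZ u ((((m:ℤ) - 1 - X.1, (n:ℤ) - 1 - X.2) : ℤ × ℤ) - A)
        = detZ (-u) (X - ((m:ℤ) - 1 - A.1, (n:ℤ) - 1 - A.2)) := by
      simp [detZ]; try ring
    rw [e]; exact h.1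
  · have e : detZ v ((((m:ℤ) - 1 - X.1, (n:ℤ) - 1 - X.2) : ℤ × ℤ) - C)
        = detZ (-v) (X - ((m:ℤ) - 1 - C.1, (n:ℤ) - 1 - C.2)) := by
      simp [detZ]; try ring
    rw [e]; exact h.2

/-- Applying `glcore` to the 180°-rotated configuration. -/
lemma gl_rot {m n : ℕ} {u v A C : ℤ × ℤ} (hm : 2 ≤ m) (hn : 2 ≤ n)
    (hu : Int.gcd u.1 u.2 = 1) (hv : Int.gcd v.1 v.2 = 1)
    (hA1 : 1 ≤ A.1) (hA2 : A.1 ≤ (m:ℤ) - 2) (hA3 : 1 ≤ A.2) (hA4 : A.2 ≤ (n:ℤ) - 2)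
    (hC1 : 1 ≤ C.1) (hC2 : C.1 ≤ (m:ℤ) - 2) (hC3 : 1 ≤ C.2) (hC4 : C.2 ≤ (n:ℤ) - 2)
    (hD : C + v ∈ Grid m n)
    (hr : 0 ≤ detZ v (A - C))
    (ht : 0 ≤ detZ u v)
    (hbad : BadW m n u v A C)
    (hupos : 1 ≤ -u.1 ∨ (u.1 = 0 ∧ u.2 = -1)) :
    detZ u (C + v - A) ≤ 2 * (|u.1| + |u.2|) := by
  obtain ⟨hg1, hg2, hg3, hg4⟩ := hD
  simp only [Prod.fst_add, Prod.snd_add] at hg1 hg2 hg3 hg4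
  have key := glcore (u := -u) (v := -v) (A := ((m:ℤ) - 1 - A.1, (n:ℤ) - 1 - A.2))
    (C := ((m:ℤ) - 1 - C.1, (n:ℤ) - 1 - C.2)) hm hn
    (by simpa [Int.gcd] using hu) (by simpa [Int.gcd] using hv)
    (by simp; omega) (by simp; omega) (by simp; omega) (by simp; omega)
    (by simp; omega) (by simp; omega) (by simp; omega) (by simp; omega)
    ?_ ?_ ?_ (badw_rot hbad) ?_
  · have e : detZ (-u) ((((m:ℤ) - 1 - C.1, (n:ℤ) - 1 - C.2) : ℤ × ℤ) + -v
        - ((m:ℤ) - 1 - A.1, (n:ℤ) - 1 - A.2)) = detZ u (C + v - A) := by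
      simp [detZ]; try ring
    rw [e] at key
    simpa using key
  · refine ⟨?_, ?_, ?_, ?_⟩
    · show (0:ℤ) ≤ (m:ℤ) - 1 - C.1 + -v.1
      omega
    · show (m:ℤ) - 1 - C.1 + -v.1 < (m:ℤ)
      omega
    · show (0:ℤ) ≤ (n:ℤ) - 1 - C.2 + -v.2
      omega
    · show (n:ℤ) - 1 - C.2 + -v.2 < (n:ℤ)
      omega
  · have e : detZ (-v) ((((m:ℤ) - 1 - A.1, (n:ℤ) - 1 - A.2) : ℤ × ℤ)
        - ((m:ℤ) - 1 - C.1, (n:ℤ) - 1 - C.2)) = detZ v (A - C) := by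
      simp [detZ]; try ring
    rw [e]; exact hr
  · have e : detZ (-u) (-v) = detZ u v := by simp [detZ]; try ring
    rw [e]; exact ht
  · rcases hupos with h | ⟨h1, h2⟩
    · left; simpa using h
    · right; constructor
      · simp [h1]
      · simp [h2]

/-- Main geometric lemma: in a weakly bad, nonnegatively oriented configuration,
the line CD lies within lattice distance 2(|u₁|+|u₂|) of the line AB. -/
lemma gl {m n : ℕ} {u v A C : ℤ × ℤ} (hm : 2 ≤ m) (hn : 2 ≤ n)
    (hu : Int.gcd u.1 u.2 = 1) (hv : Int.gcd v.1 v.2 = 1)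
    (hA1 : 1 ≤ A.1) (hA2 : A.1 ≤ (m:ℤ) - 2) (hA3 : 1 ≤ A.2) (hA4 : A.2 ≤ (n:ℤ) - 2)
    (hC1 : 1 ≤ C.1) (hC2 : C.1 ≤ (m:ℤ) - 2) (hC3 : 1 ≤ C.2) (hC4 : C.2 ≤ (n:ℤ) - 2)
    (hD : C + v ∈ Grid m n)
    (hr : 0 ≤ detZ v (A - C))
    (ht : 0 ≤ detZ u v)
    (hbad : BadW m n u v A C) :
    detZ u (C + v - A) ≤ 2 * (|u.1| + |u.2|) := by
  rcases le_or_gt 1 u.1 with hU | hU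
  · exact glcore hm hn hu hv hA1 hA2 hA3 hA4 hC1 hC2 hC3 hC4 hD hr ht hbad (Or.inl hU)
  rcases eq_or_lt_of_le (by omega : u.1 ≤ 0) with hU0 | hUneg
  · have hU0' : u.1 = 0 := hU0
    have hu2 : u.2 = 1 ∨ u.2 = -1 := by
      rw [hU0'] at hu
      have := Int.natAbs_eq_iff.mp (by simpa [Int.gcd] using hu)
      omega
    rcases hu2 with h2 | h2
    · exact glcore hm hn hu hv hA1 hA2 hA3 hA4 hC1 hC2 hC3 hC4 hD hr ht hbad
        (Or.inr ⟨hU0', h2⟩)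
    · exact gl_rot hm hn hu hv hA1 hA2 hA3 hA4 hC1 hC2 hC3 hC4 hD hr ht hbad
        (Or.inr ⟨hU0', h2⟩)
  · exact gl_rot hm hn hu hv hA1 hA2 hA3 hA4 hC1 hC2 hC3 hC4 hD hr ht hbad
      (Or.inl (by omega))

end CPPNB
namespace CPPNB

lemma sq_one_le {d : ℤ} (h : d ≠ 0) : 1 ≤ d ^ 2 := by
  rcases lt_or_gt_of_ne h with h | h <;> nlinarith

/-- The set of ordered bad tuples with nonnegative mutual orientation. -/
def Tset (m n : ℕ) : Set (((ℤ×ℤ)×(ℤ×ℤ)) × ((ℤ×ℤ)×(ℤ×ℤ))) :=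
  {x | ProperPair m n x.1.1 x.1.2 x.2.1 x.2.2 ∧
    (∀ X ∈ Grid m n, SegTrue x.1.1 x.1.2 X → SegTrue x.2.1 x.2.2 X → X ∉ GridBoundary m n) ∧
    0 ≤ detZ (x.1.2 - x.1.1) (x.2.2 - x.2.1)}

lemma proper_swap {m n : ℕ} {A B C D : ℤ × ℤ} (h : ProperPair m n A B C D) :
    ProperPair m n C D A B := by
  obtain ⟨g1, g2, g3, g4, g5, g6, g7, g8, g9, g10⟩ := h
  exact ⟨g3, g4, g1, g2, g6, g5, g9, g10, g7, g8⟩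

lemma S_eq (m n : ℕ) :
    {z : Sym2 ((ℤ × ℤ) × (ℤ × ℤ)) | ∃ A B C D : ℤ × ℤ,
      z = s((A, B), (C, D)) ∧ ProperPair m n A B C D ∧
      ∀ X ∈ Grid m n, SegTrue A B X → SegTrue C D X → X ∉ GridBoundary m n}
    = Function.uncurry Sym2.mk '' Tset m n := by
  ext z
  constructor
  · rintro ⟨A, B, C, D, hz, hP, hN⟩
    rcases le_or_gt 0 (detZ (B - A) (D - C)) with ht | ht
    · exact ⟨((A, B), (C, D)), ⟨hP, hN, ht⟩, hz.symm⟩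
    · refine ⟨((C, D), (A, B)), ⟨proper_swap hP, ?_, ?_⟩, ?_⟩
      · intro X hX h1 h2; exact hN X hX h2 h1
      · have e : detZ (D - C) (B - A) = -detZ (B - A) (D - C) := by
          simp [detZ]; try ring
        rw [e]; omega
      · rw [hz]; exact Sym2.eq_swap
  · rintro ⟨x, hx, hz⟩
    exact ⟨x.1.1, x.1.2, x.2.1, x.2.2, hz.symm, hx.1, hx.2.1⟩

/-- The band of points at signed lattice distance between 0 and 2(|u₁|+|u₂|) from A. -/
def Band (m n : ℕ) (A u X : ℤ × ℤ) : Prop :=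
  X ∈ Grid m n ∧ 0 ≤ detZ u (X - A) ∧ detZ u (X - A) ≤ 2 * (|u.1| + |u.2|)

/-- The enclosing structured set. -/
def Uset (m n : ℕ) : Set (((ℤ×ℤ)×(ℤ×ℤ)) × ((ℤ×ℤ)×(ℤ×ℤ))) :=
  {x | x.1.1 ∈ Grid m n ∧ x.1.2 ∈ Grid m n ∧ x.1.2 - x.1.1 ≠ 0 ∧
    Band m n x.1.1 (x.1.2 - x.1.1) x.2.1 ∧ Band m n x.1.1 (x.1.2 - x.1.1) x.2.2}

lemma interior_coords {m n : ℕ} {A : ℤ × ℤ} (hg : A ∈ Grid m n)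
    (hnb : A ∉ GridBoundary m n) :
    1 ≤ A.1 ∧ A.1 ≤ (m:ℤ) - 2 ∧ 1 ≤ A.2 ∧ A.2 ≤ (n:ℤ) - 2 := by
  obtain ⟨h1, h2, h3, h4⟩ := hg
  have : ¬(A.1 = 0 ∨ A.1 = (m:ℤ) - 1 ∨ A.2 = 0 ∨ A.2 = (n:ℤ) - 1) :=
    fun h => hnb ⟨⟨h1, h2, h3, h4⟩, h⟩
  omega

lemma T_sub_U {m n : ℕ} (hm : 2 ≤ m) (hn : 2 ≤ n) : Tset m n ⊆ Uset m n := by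
  rintro ⟨⟨A, B⟩, ⟨C, D⟩⟩ ⟨hP, hN, ht⟩
  dsimp only at hP hN ht ⊢
  obtain ⟨hAg, hBg, hCg, hDg, hprAB, hprCD, hCDA, hCDB, hABC, hABD⟩ := hP
  set u := B - A with hu
  set v := D - C with hv
  have huu : Int.gcd u.1 u.2 = 1 := hprAB
  have hvv : Int.gcd v.1 v.2 = 1 := hprCD
  have hune : u ≠ 0 := by
    intro h
    rw [h] at huu
    simp [Int.gcd] at huu
  have hvne : v ≠ 0 := by
    intro h
    rw [h] at hvv
    simp [Int.gcd] at hvv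
  -- A is a true point of the conjunction, hence not on the boundary
  have hselfA : SegTrue A B A := by
    left
    constructor
    · simp [detZ]
    · have hne : (A.1 - B.1) ≠ 0 ∨ (A.2 - B.2) ≠ 0 := by
        by_contra hcon
        push_neg at hcon
        apply hune
        have : B.1 - A.1 = 0 := by omega
        have h2 : B.2 - A.2 = 0 := by omega
        rw [hu]
        exact Prod.ext (by simpa using this) (by simpa using h2)
      have : 1 ≤ (A.1 - B.1) ^ 2 + (A.2 - B.2) ^ 2 := by
        rcases hne with h | h
        · nlinarith [sq_one_le h, sq_nonneg (A.2 - B.2)]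
        · nlinarith [sq_one_le h, sq_nonneg (A.1 - B.1)]
      nlinarith [sq_nonneg (A.1 - A.1), sq_nonneg (A.2 - A.2)]
  have hselfC : SegTrue C D C := by
    left
    constructor
    · simp [detZ]
    · have hne : (C.1 - D.1) ≠ 0 ∨ (C.2 - D.2) ≠ 0 := by
        by_contra hcon
        push_neg at hcon
        apply hvne
        have : D.1 - C.1 = 0 := by omega
        have h2 : D.2 - C.2 = 0 := by omega
        rw [hv]
        exact Prod.ext (by simpa using this) (by simpa using h2)
      have : 1 ≤ (C.1 - D.1) ^ 2 + (C.2 - D.2) ^ 2 := by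
        rcases hne with h | h
        · nlinarith [sq_one_le h, sq_nonneg (C.2 - D.2)]
        · nlinarith [sq_one_le h, sq_nonneg (C.1 - D.1)]
      nlinarith
  have hAnb : A ∉ GridBoundary m n := hN A hAg hselfA hCDA
  have hCnb : C ∉ GridBoundary m n := hN C hCg hABC hselfC
  obtain ⟨hA1, hA2, hA3, hA4⟩ := interior_coords hAg hAnb
  obtain ⟨hC1, hC2, hC3, hC4⟩ := interior_coords hCg hCnb
  have hbad : BadW m n u v A C := by
    intro X hX ⟨h1, h2⟩
    exact hN X hX.1 (Or.inr h1) (Or.inr h2) hX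
  have hr : 0 ≤ detZ v (A - C) := by
    rcases hCDA with ⟨h, _⟩ | h <;> rw [← hv] at h <;> omega
  have hDeq : C + v = D := by rw [hv]; ring
  have hq := gl hm hn huu hvv hA1 hA2 hA3 hA4 hC1 hC2 hC3 hC4 (by rw [hDeq]; exact hDg)
    hr ht hbad
  rw [hDeq] at hq
  have hq0 : 0 ≤ detZ u (D - A) := by
    rcases hABD with ⟨h, _⟩ | h <;> rw [← hu] at h <;> omega
  have hp0 : 0 ≤ detZ u (C - A) := by
    rcases hABC with ⟨h, _⟩ | h <;> rw [← hu] at h <;> omega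
  have hpq : detZ u (D - A) = detZ u (C - A) + detZ u v := by
    rw [hu, hv]; simp [detZ]; ring
  refine ⟨hAg, hBg, ?_, ⟨hCg, ?_, ?_⟩, ⟨hDg, ?_, ?_⟩⟩
  · show u ≠ 0
    exact hune
  · show 0 ≤ detZ u (C - A)
    exact hp0
  · show detZ u (C - A) ≤ 2 * (|u.1| + |u.2|)
    omega
  · show 0 ≤ detZ u (D - A)
    exact hq0
  · show detZ u (D - A) ≤ 2 * (|u.1| + |u.2|)
    omega

end CPPNB
namespace CPPNB

lemma grid_finite (m n : ℕ) : (Grid m n).Finite := by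
  apply Set.Finite.subset (Set.finite_Icc ((0:ℤ), (0:ℤ)) ((m:ℤ) - 1, (n:ℤ) - 1))
  rintro ⟨x, y⟩ ⟨h1, h2, h3, h4⟩
  simp only [Set.mem_Icc, Prod.mk_le_mk]
  exact ⟨⟨h1, h3⟩, by omega, by omega⟩

lemma uset_finite (m n : ℕ) : (Uset m n).Finite := by
  apply Set.Finite.subset
    (Set.Finite.prod (Set.Finite.prod (grid_finite m n) (grid_finite m n))
      (Set.Finite.prod (grid_finite m n) (grid_finite m n)))
  rintro x ⟨h1, h2, _, h4, h5⟩
  exact ⟨⟨h1, h2⟩, ⟨h4.1, h5.1⟩⟩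

lemma band_gap_row {m n : ℕ} {A u X Y : ℤ × ℤ}
    (hX : Band m n A u X) (hY : Band m n A u Y) (hst : X.2 = Y.2)
    (hb : |u.1| ≤ |u.2|) (hne : u ≠ 0) : |X.1 - Y.1| ≤ 4 := by
  have h2 : 1 ≤ |u.2| := by
    rcases eq_or_ne u.2 0 with h | h
    · exfalso
      apply hne
      have h0 : u.1 = 0 := by rw [h] at hb; simpa using hb
      exact Prod.ext h0 h
    · have h3 := abs_pos.mpr h
      omega
  have hdiff : detZ u (X - A) - detZ u (Y - A) = -(u.2 * (X.1 - Y.1)) := by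
    have e : detZ u (X - A) - detZ u (Y - A)
        = u.1 * (X.2 - Y.2) - u.2 * (X.1 - Y.1) := by
      simp [detZ]; ring
    rw [e, hst]; ring
  have b1 := hX.2.1; have b2 := hX.2.2; have b3 := hY.2.1; have b4 := hY.2.2
  have n1 := abs_nonneg u.1
  have habs : |u.2 * (X.1 - Y.1)| ≤ |u.2| * 4 := by
    rw [abs_le]
    omega
  rw [abs_mul] at habs
  have hle : |X.1 - Y.1| ≤ 4 :=
    (mul_le_mul_iff_right₀ (show (0:ℤ) < |u.2| by omega)).mp habs
  exact hle

lemma band_gap_col {m n : ℕ} {A u X Y : ℤ × ℤ}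
    (hX : Band m n A u X) (hY : Band m n A u Y) (hst : X.1 = Y.1)
    (hb : |u.2| ≤ |u.1|) (hne : u ≠ 0) : |X.2 - Y.2| ≤ 4 := by
  have h2 : 1 ≤ |u.1| := by
    rcases eq_or_ne u.1 0 with h | h
    · exfalso
      apply hne
      have h0 : u.2 = 0 := by rw [h] at hb; simpa using hb
      exact Prod.ext h h0
    · have h3 := abs_pos.mpr h
      omega
  have hdiff : detZ u (X - A) - detZ u (Y - A) = u.1 * (X.2 - Y.2) := by
    have e : detZ u (X - A) - detZ u (Y - A)
        = u.1 * (X.2 - Y.2) - u.2 * (X.1 - Y.1) := by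
      simp [detZ]; ring
    rw [e, hst]; ring
  have b1 := hX.2.1; have b2 := hX.2.2; have b3 := hY.2.1; have b4 := hY.2.2
  have n1 := abs_nonneg u.2
  have habs : |u.1 * (X.2 - Y.2)| ≤ |u.1| * 4 := by
    rw [abs_le]
    omega
  rw [abs_mul] at habs
  exact (mul_le_mul_iff_right₀ (show (0:ℤ) < |u.1| by omega)).mp habs

lemma mod5_eq {a b : ℤ} (h : a % 5 = b % 5) (hle : |a - b| ≤ 4) : a = b := by
  have hd : (5:ℤ) ∣ a - b := Int.dvd_of_emod_eq_zero
    (Int.emod_emod_of_dvd _ (dvd_refl 5) ▸ (Int.emod_eq_emod_iff_emod_sub_eq_zero.mp h))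
  obtain ⟨c, hc⟩ := hd
  have := abs_le.mp hle
  omega

noncomputable def FI (k : ℕ) : Finset ℤ := Finset.Icc 0 ((k:ℤ) - 1)

noncomputable def F5 : Finset ℤ := Finset.Icc 0 4

lemma FI_card (k : ℕ) : (FI k).card = k := by
  rw [FI, Int.card_Icc]
  simp

lemma F5_card : F5.card = 5 := by
  rw [F5, Int.card_Icc]
  rfl

noncomputable def FG (m n : ℕ) : Finset (ℤ × ℤ) := FI m ×ˢ FI n

lemma FG_card (m n : ℕ) : (FG m n).card = m * n := by
  rw [FG, Finset.card_product, FI_card, FI_card]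

lemma mem_FG {m n : ℕ} {X : ℤ × ℤ} (h : X ∈ Grid m n) : X ∈ FG m n := by
  obtain ⟨h1, h2, h3, h4⟩ := h
  rw [FG, Finset.mem_product, FI, FI, Finset.mem_Icc, Finset.mem_Icc]
  omega

lemma mem_F5 (a : ℤ) : a % 5 ∈ F5 := by
  rw [F5, Finset.mem_Icc]
  have := Int.emod_nonneg a (by norm_num : (5:ℤ) ≠ 0)
  have := Int.emod_lt_of_pos a (by norm_num : (0:ℤ) < 5)
  omega

end CPPNB
namespace CPPNB

def psirow (x : ((ℤ×ℤ)×(ℤ×ℤ)) × ((ℤ×ℤ)×(ℤ×ℤ))) : ((ℤ×ℤ)×(ℤ×ℤ)) × ((ℤ×ℤ)×(ℤ×ℤ)) :=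
  (x.1, ((x.2.1.2, x.2.1.1 % 5), (x.2.2.2, x.2.2.1 % 5)))

def psicol (x : ((ℤ×ℤ)×(ℤ×ℤ)) × ((ℤ×ℤ)×(ℤ×ℤ))) : ((ℤ×ℤ)×(ℤ×ℤ)) × ((ℤ×ℤ)×(ℤ×ℤ)) :=
  (x.1, ((x.2.1.1, x.2.1.2 % 5), (x.2.2.1, x.2.2.2 % 5)))

lemma mem_FI2 {m n : ℕ} {X : ℤ × ℤ} (h : X ∈ Grid m n) : X.2 ∈ FI n := by
  obtain ⟨_, _, h3, h4⟩ := h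
  rw [FI, Finset.mem_Icc]
  omega

lemma mem_FI1 {m n : ℕ} {X : ℤ × ℤ} (h : X ∈ Grid m n) : X.1 ∈ FI m := by
  obtain ⟨h1, h2, _, _⟩ := h
  rw [FI, Finset.mem_Icc]
  omega

lemma U1_bound (m n : ℕ) :
    ({x | x ∈ Uset m n ∧ |(x.1.2 - x.1.1).1| ≤ |(x.1.2 - x.1.1).2|}).ncard
      ≤ ((m*n) * (m*n)) * ((n*5) * (n*5)) := by
  set S1 := {x | x ∈ Uset m n ∧ |(x.1.2 - x.1.1).1| ≤ |(x.1.2 - x.1.1).2|} with hS1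
  set F1 := (FG m n ×ˢ FG m n) ×ˢ ((FI n ×ˢ F5) ×ˢ (FI n ×ˢ F5)) with hF1
  have hinj : Set.InjOn psirow S1 := by
    rintro x ⟨⟨hxA, hxB, hxne, hxC, hxD⟩, hxb⟩ y ⟨⟨hyA, hyB, hyne, hyC, hyD⟩, hyb⟩ heq
    rw [psirow, psirow, Prod.ext_iff] at heq
    obtain ⟨hAB, hrest⟩ := heq
    rw [Prod.ext_iff] at hrest
    obtain ⟨hC, hD⟩ := hrest
    rw [Prod.ext_iff] at hC hD
    dsimp only at hC hD
    obtain ⟨hC2, hC1⟩ := hC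
    obtain ⟨hD2, hD1⟩ := hD
    rw [← hAB] at hyC hyD
    have hCeq : x.2.1 = y.2.1 := by
      refine Prod.ext (mod5_eq hC1 ?_) hC2
      exact band_gap_row hxC hyC hC2 hxb hxne
    have hDeq : x.2.2 = y.2.2 := by
      refine Prod.ext (mod5_eq hD1 ?_) hD2
      exact band_gap_row hxD hyD hD2 hxb hxne
    exact Prod.ext hAB (Prod.ext hCeq hDeq)
  have himg : psirow '' S1 ⊆ ↑F1 := by
    rintro _ ⟨x, ⟨⟨hxA, hxB, hxne, hxC, hxD⟩, hxb⟩, rfl⟩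
    rw [hF1, psirow]
    simp only [Finset.coe_product, Set.mem_prod, Finset.mem_coe]
    refine ⟨⟨?_, ?_⟩, ⟨?_, ?_⟩, ⟨?_, ?_⟩⟩
    · exact mem_FG hxA
    · exact mem_FG hxB
    · exact mem_FI2 hxC.1
    · exact mem_F5 _
    · exact mem_FI2 hxD.1
    · exact mem_F5 _
  calc S1.ncard = (psirow '' S1).ncard := (Set.ncard_image_of_injOn hinj).symm
    _ ≤ (↑F1 : Set _).ncard := Set.ncard_le_ncard himg (F1.finite_toSet)
    _ = F1.card := Set.ncard_coe_finset F1
    _ = ((m*n) * (m*n)) * ((n*5) * (n*5)) := by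
        rw [hF1]
        simp only [Finset.card_product, FG_card, FI_card, F5_card]

lemma U2_bound (m n : ℕ) :
    ({x | x ∈ Uset m n ∧ |(x.1.2 - x.1.1).2| ≤ |(x.1.2 - x.1.1).1|}).ncard
      ≤ ((m*n) * (m*n)) * ((m*5) * (m*5)) := by
  set S2 := {x | x ∈ Uset m n ∧ |(x.1.2 - x.1.1).2| ≤ |(x.1.2 - x.1.1).1|} with hS2
  set F2 := (FG m n ×ˢ FG m n) ×ˢ ((FI m ×ˢ F5) ×ˢ (FI m ×ˢ F5)) with hF2
  have hinj : Set.InjOn psicol S2 := by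
    rintro x ⟨⟨hxA, hxB, hxne, hxC, hxD⟩, hxb⟩ y ⟨⟨hyA, hyB, hyne, hyC, hyD⟩, hyb⟩ heq
    rw [psicol, psicol, Prod.ext_iff] at heq
    obtain ⟨hAB, hrest⟩ := heq
    rw [Prod.ext_iff] at hrest
    obtain ⟨hC, hD⟩ := hrest
    rw [Prod.ext_iff] at hC hD
    dsimp only at hC hD
    obtain ⟨hC2, hC1⟩ := hC
    obtain ⟨hD2, hD1⟩ := hD
    rw [← hAB] at hyC hyD
    have hCeq : x.2.1 = y.2.1 := by
      refine Prod.ext hC2 (mod5_eq hC1 ?_)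
      exact band_gap_col hxC hyC hC2 hxb hxne
    have hDeq : x.2.2 = y.2.2 := by
      refine Prod.ext hD2 (mod5_eq hD1 ?_)
      exact band_gap_col hxD hyD hD2 hxb hxne
    exact Prod.ext hAB (Prod.ext hCeq hDeq)
  have himg : psicol '' S2 ⊆ ↑F2 := by
    rintro _ ⟨x, ⟨⟨hxA, hxB, hxne, hxC, hxD⟩, hxb⟩, rfl⟩
    rw [hF2, psicol]
    simp only [Finset.coe_product, Set.mem_prod, Finset.mem_coe]
    refine ⟨⟨?_, ?_⟩, ⟨?_, ?_⟩, ⟨?_, ?_⟩⟩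
    · exact mem_FG hxA
    · exact mem_FG hxB
    · exact mem_FI1 hxC.1
    · exact mem_F5 _
    · exact mem_FI1 hxD.1
    · exact mem_F5 _
  calc S2.ncard = (psicol '' S2).ncard := (Set.ncard_image_of_injOn hinj).symm
    _ ≤ (↑F2 : Set _).ncard := Set.ncard_le_ncard himg (F2.finite_toSet)
    _ = F2.card := Set.ncard_coe_finset F2
    _ = ((m*n) * (m*n)) * ((m*5) * (m*5)) := by
        rw [hF2]
        simp only [Finset.card_product, FG_card, FI_card, F5_card]

lemma main_count (m n : ℕ) (hm : 2 ≤ m) (hn : 2 ≤ n) :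
    ({z : Sym2 ((ℤ × ℤ) × (ℤ × ℤ)) | ∃ A B C D : ℤ × ℤ,
        z = s((A, B), (C, D)) ∧ ProperPair m n A B C D ∧
        ∀ X ∈ Grid m n, SegTrue A B X → SegTrue C D X → X ∉ GridBoundary m n}).ncard
      ≤ 25 * (m^2 * n^2 * (m+n)^2) := by
  rw [S_eq]
  have hTfin : (Tset m n).Finite := (uset_finite m n).subset (T_sub_U hm hn)
  have h1 : (Function.uncurry Sym2.mk '' Tset m n).ncard ≤ (Tset m n).ncard := Set.ncard_image_le hTfin
  set S1 := {x | x ∈ Uset m n ∧ |(x.1.2 - x.1.1).1| ≤ |(x.1.2 - x.1.1).2|} with hS1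
  set S2 := {x | x ∈ Uset m n ∧ |(x.1.2 - x.1.1).2| ≤ |(x.1.2 - x.1.1).1|} with hS2
  have hfin1 : S1.Finite := (uset_finite m n).subset (fun x hx => hx.1)
  have hfin2 : S2.Finite := (uset_finite m n).subset (fun x hx => hx.1)
  have hsub : Tset m n ⊆ S1 ∪ S2 := by
    intro x hx
    have hxU := T_sub_U hm hn hx
    rcases le_total |(x.1.2 - x.1.1).1| |(x.1.2 - x.1.1).2| with h | h
    · exact Or.inl ⟨hxU, h⟩
    · exact Or.inr ⟨hxU, h⟩
  have h2 : (Tset m n).ncard ≤ (S1 ∪ S2).ncard :=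
    Set.ncard_le_ncard hsub (hfin1.union hfin2)
  have h3 : (S1 ∪ S2).ncard ≤ S1.ncard + S2.ncard := Set.ncard_union_le S1 S2
  have h4 : S1.ncard ≤ ((m*n) * (m*n)) * ((n*5) * (n*5)) := U1_bound m n
  have h5 : S2.ncard ≤ ((m*n) * (m*n)) * ((m*5) * (m*5)) := U2_bound m n
  have harith : ((m*n) * (m*n)) * ((n*5) * (n*5)) + ((m*n) * (m*n)) * ((m*5) * (m*5))
      ≤ 25 * (m^2 * n^2 * (m+n)^2) := by nlinarith [sq_nonneg (m + n), sq_nonneg m, sq_nonneg n]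
  omega

end CPPNB

/-- the number of proper pairs of oriented segments whose conjunction has no
true points on the boundary of the grid is O(m²n²(m+n)²). -/
theorem count_proper_pairs_no_boundary_true :
    ∃ K : ℝ, ∀ m n : ℕ, 2 ≤ m → 2 ≤ n →
      (({z : Sym2 ((ℤ × ℤ) × (ℤ × ℤ)) | ∃ A B C D : ℤ × ℤ,
          z = s((A, B), (C, D)) ∧ ProperPair m n A B C D ∧
          ∀ X ∈ Grid m n, SegTrue A B X → SegTrue C D X → X ∉ GridBoundary m n}).ncard : ℝ)
        ≤ K * (m : ℝ) ^ 2 * (n : ℝ) ^ 2 * ((m : ℝ) + (n : ℝ)) ^ 2 := by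
  refine ⟨25, fun m n hm hn => ?_⟩
  have h := CPPNB.main_count m n hm hn
  have h2 := (Nat.cast_le (α := ℝ)).mpr h
  push_cast at h2
  refine le_trans h2 (le_of_eq (by ring))
end

section
/- There is an absolute constant K such that for all integers m, n ≥ 2, the number q(m,n) of proper pairs of oriented segments in 𝒢_{m,n} and the number p(m,n) of unordered pairs of prime segments in convex position with endpoints in 𝒢_{m,n} satisfy |q(m,n) − p(m,n)| ≤ K·m³n³(m+n). -/
open scoped Real

namespace QPaux

/-- The four determinants of a proper-pair configuration, all positive. -/
def P4 (A B C D : ℤ × ℤ) : Prop :=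
  0 < detZ (D - C) (A - C) ∧ 0 < detZ (D - C) (B - C) ∧
  0 < detZ (B - A) (C - A) ∧ 0 < detZ (B - A) (D - A)

/-- Nondegeneracy: the four determinants are nonzero. -/
def NonDeg (A B C D : ℤ × ℤ) : Prop :=
  detZ (D - C) (A - C) ≠ 0 ∧ detZ (D - C) (B - C) ≠ 0 ∧
  detZ (B - A) (C - A) ≠ 0 ∧ detZ (B - A) (D - A) ≠ 0

lemma primeSeg_symm {A B : ℤ × ℤ} (h : PrimeSeg A B) : PrimeSeg B A := by
  unfold PrimeSeg Int.gcd at *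
  rw [show (A.1 - B.1).natAbs = (B.1 - A.1).natAbs by omega,
    show (A.2 - B.2).natAbs = (B.2 - A.2).natAbs by omega]
  exact h

lemma primeSeg_ne {A B : ℤ × ℤ} (h : PrimeSeg A B) : A ≠ B := by
  rintro rfl
  simp [PrimeSeg] at h

lemma nonDeg_of_P4 {A B C D : ℤ × ℤ} (h : P4 A B C D) : NonDeg A B C D :=
  ⟨ne_of_gt h.1, ne_of_gt h.2.1, ne_of_gt h.2.2.1, ne_of_gt h.2.2.2⟩

lemma P4_swap {A B C D : ℤ × ℤ} (h : P4 A B C D) : P4 C D A B :=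
  ⟨h.2.2.1, h.2.2.2, h.1, h.2.1⟩

lemma proper_of_P4 {m n : ℕ} {A B C D : ℤ × ℤ}
    (hA : A ∈ Grid m n) (hB : B ∈ Grid m n) (hC : C ∈ Grid m n) (hD : D ∈ Grid m n)
    (h1 : PrimeSeg A B) (h2 : PrimeSeg C D) (h : P4 A B C D) :
    ProperPair m n A B C D :=
  ⟨hA, hB, hC, hD, h1, h2, Or.inr h.1, Or.inr h.2.1, Or.inr h.2.2.1, Or.inr h.2.2.2⟩

lemma pos_of_segTrue {A B X : ℤ × ℤ} (h : SegTrue A B X)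
    (hne : detZ (B - A) (X - A) ≠ 0) : 0 < detZ (B - A) (X - A) := by
  rcases h with h | h
  · exact absurd h.1 hne
  · exact h

lemma P4_of_proper {m n : ℕ} {A B C D : ℤ × ℤ}
    (h : ProperPair m n A B C D) (hnd : NonDeg A B C D) : P4 A B C D :=
  ⟨pos_of_segTrue h.2.2.2.2.2.2.1 hnd.1,
   pos_of_segTrue h.2.2.2.2.2.2.2.1 hnd.2.1,
   pos_of_segTrue h.2.2.2.2.2.2.2.2.1 hnd.2.2.1,
   pos_of_segTrue h.2.2.2.2.2.2.2.2.2 hnd.2.2.2⟩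

lemma quadConv_of_P4 {A B C D : ℤ × ℤ} (h : P4 A B C D) : QuadConv A B C D := by
  obtain ⟨h1, h2, h3, h4⟩ := h
  left
  simp only [detZ, Prod.fst_sub, Prod.snd_sub] at *
  refine ⟨by nlinarith, by nlinarith, by nlinarith, by nlinarith⟩

lemma P4_of_quadConv {A B C D : ℤ × ℤ} (h : QuadConv A B C D) :
    P4 A B C D ∨ P4 D C B A := by
  rcases h with ⟨h1, h2, h3, h4⟩ | ⟨h1, h2, h3, h4⟩
  · left
    simp only [P4, detZ, Prod.fst_sub, Prod.snd_sub] at *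
    refine ⟨by nlinarith, by nlinarith, by nlinarith, by nlinarith⟩
  · right
    simp only [P4, detZ, Prod.fst_sub, Prod.snd_sub] at *
    refine ⟨by nlinarith, by nlinarith, by nlinarith, by nlinarith⟩

lemma convexPos_cases {A B C D : ℤ × ℤ} (h : ConvexPos A B C D) :
    P4 A B C D ∨ P4 D C B A ∨ P4 A B D C ∨ P4 C D B A := by
  rcases h with h | h
  · rcases P4_of_quadConv h with h' | h'
    · exact Or.inl h'
    · exact Or.inr (Or.inl h')
  · rcases P4_of_quadConv h with h' | h'
    · exact Or.inr (Or.inr (Or.inl h'))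
    · exact Or.inr (Or.inr (Or.inr h'))


/-- Generic proper pairs. -/
def Qgen (m n : ℕ) : Set (Sym2 ((ℤ × ℤ) × (ℤ × ℤ))) :=
  {z | ∃ A B C D : ℤ × ℤ, z = s((A, B), (C, D)) ∧ ProperPair m n A B C D ∧ NonDeg A B C D}

/-- Generic convex prime pairs. -/
def Pgen (m n : ℕ) : Set (Sym2 (Sym2 (ℤ × ℤ))) :=
  {z | ∃ A B C D : ℤ × ℤ, z = s(s(A, B), s(C, D)) ∧
    A ∈ Grid m n ∧ B ∈ Grid m n ∧ C ∈ Grid m n ∧ D ∈ Grid m n ∧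
    PrimeSeg A B ∧ PrimeSeg C D ∧ ConvexPos A B C D ∧ NonDeg A B C D}

/-- Forgetting orientations. -/
def Phi : Sym2 ((ℤ × ℤ) × (ℤ × ℤ)) → Sym2 (Sym2 (ℤ × ℤ)) :=
  Sym2.map (fun p => s(p.1, p.2))

lemma Qgen_subset {m n : ℕ} : Qgen m n ⊆ ProperPairs m n := by
  rintro z ⟨A, B, C, D, rfl, hp, _⟩
  exact ⟨A, B, C, D, rfl, hp⟩

lemma Pgen_subset {m n : ℕ} : Pgen m n ⊆ ConvexPrimePairs m n := by
  rintro z ⟨A, B, C, D, rfl, h1, h2, h3, h4, h5, h6, h7, _⟩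
  exact ⟨A, B, C, D, rfl, h1, h2, h3, h4, h5, h6, h7⟩

lemma det_neg1 (C D A : ℤ × ℤ) : detZ (C - D) (A - D) = - detZ (D - C) (A - C) := by
  simp only [detZ, Prod.fst_sub, Prod.snd_sub]; ring

lemma det_neg2 (A B C : ℤ × ℤ) : detZ (A - B) (C - B) = - detZ (B - A) (C - A) := by
  simp only [detZ, Prod.fst_sub, Prod.snd_sub]; ring

lemma phi_image {m n : ℕ} : Phi '' Qgen m n = Pgen m n := by
  apply Set.Subset.antisymm
  · rintro z ⟨w, ⟨A, B, C, D, rfl, hp, hnd⟩, rfl⟩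
    have h4 := P4_of_proper hp hnd
    exact ⟨A, B, C, D, by simp [Phi, Sym2.map_pair_eq], hp.1, hp.2.1, hp.2.2.1, hp.2.2.2.1,
      hp.2.2.2.2.1, hp.2.2.2.2.2.1, Or.inl (quadConv_of_P4 h4), hnd⟩
  · rintro z ⟨A, B, C, D, rfl, hA, hB, hC, hD, hab, hcd, hcp, hnd⟩
    rcases convexPos_cases hcp with h | h | h | h
    · exact ⟨s((A, B), (C, D)),
        ⟨A, B, C, D, rfl, proper_of_P4 hA hB hC hD hab hcd h, nonDeg_of_P4 h⟩,
        by simp [Phi, Sym2.map_pair_eq]⟩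
    · refine ⟨s((D, C), (B, A)),
        ⟨D, C, B, A, rfl, proper_of_P4 hD hC hB hA (primeSeg_symm hcd) (primeSeg_symm hab) h,
          nonDeg_of_P4 h⟩, ?_⟩
      simp only [Phi, Sym2.map_pair_eq]
      rw [Sym2.eq_iff]
      right
      exact ⟨Sym2.eq_swap, Sym2.eq_swap⟩
    · refine ⟨s((A, B), (D, C)),
        ⟨A, B, D, C, rfl, proper_of_P4 hA hB hD hC hab (primeSeg_symm hcd) h,
          nonDeg_of_P4 h⟩, ?_⟩
      simp only [Phi, Sym2.map_pair_eq]
      rw [Sym2.eq_iff]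
      left
      exact ⟨rfl, Sym2.eq_swap⟩
    · refine ⟨s((C, D), (B, A)),
        ⟨C, D, B, A, rfl, proper_of_P4 hC hD hB hA hcd (primeSeg_symm hab) h,
          nonDeg_of_P4 h⟩, ?_⟩
      simp only [Phi, Sym2.map_pair_eq]
      rw [Sym2.eq_iff]
      right
      exact ⟨rfl, Sym2.eq_swap⟩

lemma no_both1 {A B C D : ℤ × ℤ} (h : P4 A B C D) (h' : P4 A B D C) : False := by
  have e := det_neg1 C D A
  have := h.1; have := h'.1
  omega

lemma no_both2 {A B C D : ℤ × ℤ} (h : P4 A B C D) (h' : P4 B A C D) : False := by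
  have e := det_neg2 A B C
  have := h.2.2.1; have := h'.2.2.1
  omega

lemma no_both3 {A B C D : ℤ × ℤ} (h : P4 A B C D) (h' : P4 B A D C) : False := by
  have e := det_neg2 A B D
  have := h.2.2.2; have := h'.2.2.1
  omega

lemma inj_core {A B C D A' B' C' D' : ℤ × ℤ} (h : P4 A B C D) (h' : P4 A' B' C' D')
    (h1 : s(A, B) = s(A', B')) (h2 : s(C, D) = s(C', D')) :
    (A, B) = (A', B') ∧ (C, D) = (C', D') := by
  rw [Sym2.eq_iff] at h1 h2
  rcases h1 with ⟨rfl, rfl⟩ | ⟨rfl, rfl⟩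
  · rcases h2 with ⟨rfl, rfl⟩ | ⟨rfl, rfl⟩
    · exact ⟨rfl, rfl⟩
    · exact (no_both1 h h').elim
  · rcases h2 with ⟨rfl, rfl⟩ | ⟨rfl, rfl⟩
    · exact (no_both2 h h').elim
    · exact (no_both3 h h').elim

lemma phi_injOn {m n : ℕ} : Set.InjOn Phi (Qgen m n) := by
  rintro z ⟨A, B, C, D, rfl, hp, hnd⟩ z' ⟨A', B', C', D', rfl, hp', hnd'⟩ heq
  have h4 := P4_of_proper hp hnd
  have h4' := P4_of_proper hp' hnd'
  simp only [Phi, Sym2.map_pair_eq] at heq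
  rw [Sym2.eq_iff] at heq
  rcases heq with ⟨e1, e2⟩ | ⟨e1, e2⟩
  · obtain ⟨f1, f2⟩ := inj_core h4 h4' e1 e2
    rw [f1, f2]
  · obtain ⟨f1, f2⟩ := inj_core h4 (P4_swap h4') e1 e2
    rw [f1, f2]
    exact Sym2.eq_swap


abbrev Tup := (ℤ × ℤ) × (ℤ × ℤ) × (ℤ × ℤ) × (ℤ × ℤ)

noncomputable def GF (m n : ℕ) : Finset (ℤ × ℤ) := Finset.Ico (0:ℤ) m ×ˢ Finset.Ico (0:ℤ) n

lemma mem_GF {m n : ℕ} {p : ℤ × ℤ} : p ∈ GF m n ↔ p ∈ Grid m n := by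
  simp [GF, Grid, Finset.mem_product, Finset.mem_Ico, and_assoc]

lemma GF_card (m n : ℕ) : (GF m n).card = m * n := by
  simp [GF, Finset.card_product, Int.card_Ico]

lemma grid_finite {m n : ℕ} : (Grid m n).Finite :=
  Set.Finite.subset (GF m n).finite_toSet (fun p hp => mem_GF.mpr hp)

def InGrid4 (m n : ℕ) (t : Tup) : Prop :=
  t.1 ∈ Grid m n ∧ t.2.1 ∈ Grid m n ∧ t.2.2.1 ∈ Grid m n ∧ t.2.2.2 ∈ Grid m n

def G4 (m n : ℕ) : Set Tup := {t | InGrid4 m n t}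

lemma G4_finite {m n : ℕ} : (G4 m n).Finite := by
  have : G4 m n ⊆ (Grid m n) ×ˢ ((Grid m n) ×ˢ ((Grid m n) ×ˢ (Grid m n))) := by
    rintro ⟨P, Q, R, S⟩ ⟨h1, h2, h3, h4⟩
    exact ⟨h1, h2, h3, h4⟩
  exact Set.Finite.subset
    (grid_finite.prod (grid_finite.prod (grid_finite.prod grid_finite))) this

def colSet (m n : ℕ) : Set Tup :=
  {t | InGrid4 m n t ∧ t.1 ≠ t.2.1 ∧ detZ (t.2.1 - t.1) (t.2.2.1 - t.1) = 0}

lemma colSet_finite {m n : ℕ} : (colSet m n).Finite :=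
  G4_finite.subset (fun t ht => ht.1)

lemma colSet_bound (m n : ℕ) :
    (colSet m n).ncard ≤ (m * n) ^ 3 * (m + n) := by
  classical
  have hle := Set.ncard_le_ncard_of_injOn
    (f := fun t : Tup =>
      (t.1, t.2.1, (if t.2.1.1 ≠ t.1.1 then t.2.2.1.1 else t.2.2.1.2), t.2.2.2))
    (s := colSet m n)
    (t := ↑(GF m n ×ˢ GF m n ×ˢ Finset.Ico (0:ℤ) (m + n) ×ˢ GF m n))
    ?_ ?_ (Finset.finite_toSet _)
  · refine le_trans hle ?_
    rw [Set.ncard_coe_finset]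
    simp only [Finset.card_product, GF_card, Int.card_Ico]
    have : ((m : ℤ) + n - 0).toNat = m + n := by omega
    rw [this]
    ring_nf
    omega
  · rintro ⟨P, Q, R, S⟩ ⟨⟨h1, h2, h3, h4⟩, hne, hdet⟩
    have h3' : R ∈ Grid m n := h3
    obtain ⟨u1, u2, u3, u4⟩ := h3'
    simp only [Finset.coe_product, Set.mem_prod, Finset.mem_coe, mem_GF]
    refine ⟨h1, h2, ?_, h4⟩
    simp only [Finset.mem_coe, Finset.mem_Ico]
    split <;> constructor <;> omega
  · rintro ⟨P, Q, ⟨Rx, Ry⟩, S⟩ ⟨⟨h1, h2, h3, h4⟩, hne, hdet⟩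
      ⟨P', Q', ⟨Rx', Ry'⟩, S'⟩ ⟨⟨h1', h2', h3', h4'⟩, hne', hdet'⟩ heq
    have hneP : P ≠ Q := hne
    simp only [Prod.mk.injEq] at heq
    obtain ⟨rfl, rfl, e3, rfl⟩ := heq
    have hd : detZ (Q - P) ((Rx, Ry) - P) = 0 := hdet
    have hd' : detZ (Q - P) ((Rx', Ry') - P) = 0 := hdet'
    simp only [detZ, Prod.fst_sub, Prod.snd_sub] at hd hd'
    simp only [Prod.mk.injEq, and_true, true_and]
    by_cases hQP : Q.1 ≠ P.1
    · have e3' : Rx = Rx' := by simpa [hQP] using e3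
      subst e3'
      refine ⟨rfl, ?_⟩
      have hz : (Q.1 - P.1) * (Ry - Ry') = 0 := by ring_nf; ring_nf at hd hd'; linarith
      rcases mul_eq_zero.mp hz with h | h
      · exact absurd (by omega : Q.1 = P.1) hQP
      · omega
    · push_neg at hQP
      have e3' : Ry = Ry' := by simpa [hQP] using e3
      subst e3'
      have hQy : Q.2 ≠ P.2 := by
        intro h
        exact hneP (Prod.ext hQP.symm h.symm)
      rw [hQP] at hd hd'
      have hz : (Q.2 - P.2) * (Rx - P.1) = 0 := by ring_nf; ring_nf at hd; linarith
      have hz' : (Q.2 - P.2) * (Rx' - P.1) = 0 := by ring_nf; ring_nf at hd'; linarith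
      have e1 : Rx = P.1 := by
        rcases mul_eq_zero.mp hz with h | h
        · omega
        · omega
      have e2 : Rx' = P.1 := by
        rcases mul_eq_zero.mp hz' with h | h
        · omega
        · omega
      exact ⟨by omega, rfl⟩

def degSet (m n : ℕ) : Set Tup :=
  {t | InGrid4 m n t ∧ t.1 ≠ t.2.1 ∧ t.2.2.1 ≠ t.2.2.2 ∧
    ¬ NonDeg t.1 t.2.1 t.2.2.1 t.2.2.2}

lemma degSet_finite {m n : ℕ} : (degSet m n).Finite :=
  G4_finite.subset (fun t ht => ht.1)

lemma degSet_bound (m n : ℕ) :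
    (degSet m n).ncard ≤ 4 * ((m * n) ^ 3 * (m + n)) := by
  classical
  set D1 : Set Tup := {t | InGrid4 m n t ∧ t.1 ≠ t.2.1 ∧ t.2.2.1 ≠ t.2.2.2 ∧
    detZ (t.2.2.2 - t.2.2.1) (t.1 - t.2.2.1) = 0} with hD1
  set D2 : Set Tup := {t | InGrid4 m n t ∧ t.1 ≠ t.2.1 ∧ t.2.2.1 ≠ t.2.2.2 ∧
    detZ (t.2.2.2 - t.2.2.1) (t.2.1 - t.2.2.1) = 0} with hD2
  set D3 : Set Tup := {t | InGrid4 m n t ∧ t.1 ≠ t.2.1 ∧ t.2.2.1 ≠ t.2.2.2 ∧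
    detZ (t.2.1 - t.1) (t.2.2.1 - t.1) = 0} with hD3
  set D4 : Set Tup := {t | InGrid4 m n t ∧ t.1 ≠ t.2.1 ∧ t.2.2.1 ≠ t.2.2.2 ∧
    detZ (t.2.1 - t.1) (t.2.2.2 - t.1) = 0} with hD4
  have hsub : degSet m n ⊆ D1 ∪ (D2 ∪ (D3 ∪ D4)) := by
    rintro ⟨A, B, C, D⟩ ⟨hg, hne1, hne2, hnd⟩
    simp only [NonDeg, not_and_or, not_not, ne_eq] at hnd
    rcases hnd with h | h | h | h
    · exact Or.inl ⟨hg, hne1, hne2, h⟩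
    · exact Or.inr (Or.inl ⟨hg, hne1, hne2, h⟩)
    · exact Or.inr (Or.inr (Or.inl ⟨hg, hne1, hne2, h⟩))
    · exact Or.inr (Or.inr (Or.inr ⟨hg, hne1, hne2, h⟩))
  have b1 : D1.ncard ≤ (m * n) ^ 3 * (m + n) := by
    refine le_trans (Set.ncard_le_ncard_of_injOn
      (f := fun t : Tup => (t.2.2.1, t.2.2.2, t.1, t.2.1)) ?_ ?_ colSet_finite)
      (colSet_bound m n)
    · rintro ⟨A, B, C, D⟩ ⟨⟨g1, g2, g3, g4⟩, hne1, hne2, h⟩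
      exact ⟨⟨g3, g4, g1, g2⟩, hne2, h⟩
    · rintro ⟨A, B, C, D⟩ _ ⟨A', B', C', D'⟩ _ heq
      simp only [Prod.mk.injEq] at heq
      obtain ⟨rfl, rfl, rfl, rfl⟩ := heq
      rfl
  have b2 : D2.ncard ≤ (m * n) ^ 3 * (m + n) := by
    refine le_trans (Set.ncard_le_ncard_of_injOn
      (f := fun t : Tup => (t.2.2.1, t.2.2.2, t.2.1, t.1)) ?_ ?_ colSet_finite)
      (colSet_bound m n)
    · rintro ⟨A, B, C, D⟩ ⟨⟨g1, g2, g3, g4⟩, hne1, hne2, h⟩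
      exact ⟨⟨g3, g4, g2, g1⟩, hne2, h⟩
    · rintro ⟨A, B, C, D⟩ _ ⟨A', B', C', D'⟩ _ heq
      simp only [Prod.mk.injEq] at heq
      obtain ⟨rfl, rfl, rfl, rfl⟩ := heq
      rfl
  have b3 : D3.ncard ≤ (m * n) ^ 3 * (m + n) := by
    refine le_trans (Set.ncard_le_ncard_of_injOn (f := fun t : Tup => t) ?_ ?_ colSet_finite)
      (colSet_bound m n)
    · rintro ⟨A, B, C, D⟩ ⟨⟨g1, g2, g3, g4⟩, hne1, hne2, h⟩
      exact ⟨⟨g1, g2, g3, g4⟩, hne1, h⟩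
    · exact fun a _ b _ h => h
  have b4 : D4.ncard ≤ (m * n) ^ 3 * (m + n) := by
    refine le_trans (Set.ncard_le_ncard_of_injOn
      (f := fun t : Tup => (t.1, t.2.1, t.2.2.2, t.2.2.1)) ?_ ?_ colSet_finite)
      (colSet_bound m n)
    · rintro ⟨A, B, C, D⟩ ⟨⟨g1, g2, g3, g4⟩, hne1, hne2, h⟩
      exact ⟨⟨g1, g2, g4, g3⟩, hne1, h⟩
    · rintro ⟨A, B, C, D⟩ _ ⟨A', B', C', D'⟩ _ heq
      simp only [Prod.mk.injEq] at heq
      obtain ⟨rfl, rfl, rfl, rfl⟩ := heq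
      rfl
  have hfinD : ∀ X : Set Tup, X ⊆ G4 m n → X.Finite := fun X hX => G4_finite.subset hX
  calc (degSet m n).ncard ≤ (D1 ∪ (D2 ∪ (D3 ∪ D4))).ncard := by
        refine Set.ncard_le_ncard hsub ?_
        refine Set.Finite.union (hfinD _ (fun t ht => ht.1))
          (Set.Finite.union (hfinD _ (fun t ht => ht.1))
            (Set.Finite.union (hfinD _ (fun t ht => ht.1)) (hfinD _ (fun t ht => ht.1))))
    _ ≤ D1.ncard + (D2.ncard + (D3.ncard + D4.ncard)) := by
        refine le_trans (Set.ncard_union_le _ _) ?_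
        refine Nat.add_le_add_left ?_ _
        refine le_trans (Set.ncard_union_le _ _) ?_
        exact Nat.add_le_add_left (Set.ncard_union_le _ _) _
    _ ≤ 4 * ((m * n) ^ 3 * (m + n)) := by omega


def toSym (t : Tup) : Sym2 ((ℤ × ℤ) × (ℤ × ℤ)) := s((t.1, t.2.1), (t.2.2.1, t.2.2.2))

def toSym2 (t : Tup) : Sym2 (Sym2 (ℤ × ℤ)) := s(s(t.1, t.2.1), s(t.2.2.1, t.2.2.2))

lemma properPairs_finite {m n : ℕ} : (ProperPairs m n).Finite := by
  refine Set.Finite.subset ((G4_finite (m := m) (n := n)).image toSym) ?_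
  rintro z ⟨A, B, C, D, rfl, hp⟩
  exact ⟨(A, B, C, D), ⟨hp.1, hp.2.1, hp.2.2.1, hp.2.2.2.1⟩, rfl⟩

lemma convexPrimePairs_finite {m n : ℕ} : (ConvexPrimePairs m n).Finite := by
  refine Set.Finite.subset ((G4_finite (m := m) (n := n)).image toSym2) ?_
  rintro z ⟨A, B, C, D, rfl, h1, h2, h3, h4, _⟩
  exact ⟨(A, B, C, D), ⟨h1, h2, h3, h4⟩, rfl⟩

lemma qd_sub {m n : ℕ} : ProperPairs m n \ Qgen m n ⊆ toSym '' degSet m n := by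
  rintro z ⟨⟨A, B, C, D, rfl, hp⟩, hz⟩
  have hnd : ¬ NonDeg A B C D := fun hnd => hz ⟨A, B, C, D, rfl, hp, hnd⟩
  exact ⟨(A, B, C, D), ⟨⟨hp.1, hp.2.1, hp.2.2.1, hp.2.2.2.1⟩,
    primeSeg_ne hp.2.2.2.2.1, primeSeg_ne hp.2.2.2.2.2.1, hnd⟩, rfl⟩

lemma pd_sub {m n : ℕ} : ConvexPrimePairs m n \ Pgen m n ⊆ toSym2 '' degSet m n := by
  rintro z ⟨⟨A, B, C, D, rfl, h1, h2, h3, h4, h5, h6, h7⟩, hz⟩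
  have hnd : ¬ NonDeg A B C D := fun hnd =>
    hz ⟨A, B, C, D, rfl, h1, h2, h3, h4, h5, h6, h7, hnd⟩
  exact ⟨(A, B, C, D), ⟨⟨h1, h2, h3, h4⟩, primeSeg_ne h5, primeSeg_ne h6, hnd⟩, rfl⟩

lemma qd_bound {m n : ℕ} :
    (ProperPairs m n \ Qgen m n).ncard ≤ 4 * ((m * n) ^ 3 * (m + n)) :=
  le_trans (Set.ncard_le_ncard qd_sub (degSet_finite.image _))
    (le_trans (Set.ncard_image_le degSet_finite) (degSet_bound m n))

lemma pd_bound {m n : ℕ} :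
    (ConvexPrimePairs m n \ Pgen m n).ncard ≤ 4 * ((m * n) ^ 3 * (m + n)) :=
  le_trans (Set.ncard_le_ncard pd_sub (degSet_finite.image _))
    (le_trans (Set.ncard_image_le degSet_finite) (degSet_bound m n))

lemma gen_eq {m n : ℕ} : (Pgen m n).ncard = (Qgen m n).ncard := by
  rw [← phi_image]
  exact Set.ncard_image_of_injOn phi_injOn

lemma q_split {m n : ℕ} :
    qcount m n = (ProperPairs m n \ Qgen m n).ncard + (Qgen m n).ncard :=
  (Set.ncard_diff_add_ncard_of_subset Qgen_subset properPairs_finite).symm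

lemma p_split {m n : ℕ} :
    pcount m n = (ConvexPrimePairs m n \ Pgen m n).ncard + (Pgen m n).ncard :=
  (Set.ncard_diff_add_ncard_of_subset Pgen_subset convexPrimePairs_finite).symm

end QPaux

/-- |q(m,n) − p(m,n)| ≤ K·m³n³(m+n). -/
theorem q_eq_p_up_to_error :
    ∃ K : ℝ, ∀ m n : ℕ, 2 ≤ m → 2 ≤ n →
      |(qcount m n : ℝ) - (pcount m n : ℝ)| ≤
        K * (m : ℝ) ^ 3 * (n : ℝ) ^ 3 * ((m : ℝ) + (n : ℝ)) := by
  refine ⟨8, fun m n _ _ => ?_⟩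
  rw [QPaux.q_split, QPaux.p_split, QPaux.gen_eq]
  set a := (ProperPairs m n \ QPaux.Qgen m n).ncard with ha
  set b := (ConvexPrimePairs m n \ QPaux.Pgen m n).ncard with hb
  set g := (QPaux.Qgen m n).ncard with hg
  have hA : (a : ℝ) ≤ 4 * ((m * n) ^ 3 * (m + n)) := by
    have := QPaux.qd_bound (m := m) (n := n)
    calc (a : ℝ) ≤ ((4 * ((m * n) ^ 3 * (m + n)) : ℕ) : ℝ) := by exact_mod_cast this
      _ = 4 * ((m * n) ^ 3 * (m + n)) := by push_cast; ring
  have hB : (b : ℝ) ≤ 4 * ((m * n) ^ 3 * (m + n)) := by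
    have := QPaux.pd_bound (m := m) (n := n)
    calc (b : ℝ) ≤ ((4 * ((m * n) ^ 3 * (m + n)) : ℕ) : ℝ) := by exact_mod_cast this
      _ = 4 * ((m * n) ^ 3 * (m + n)) := by push_cast; ring
  have h0a : (0 : ℝ) ≤ (a : ℝ) := Nat.cast_nonneg _
  have h0b : (0 : ℝ) ≤ (b : ℝ) := Nat.cast_nonneg _
  have key : |((a + g : ℕ) : ℝ) - ((b + g : ℕ) : ℝ)| = |(a : ℝ) - (b : ℝ)| := by
    push_cast
    ring_nf
  rw [key]
  rw [abs_le]
  constructor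
  · nlinarith [sq_nonneg ((m : ℝ) * n), sq_nonneg ((m : ℝ) - n)]
  · nlinarith [sq_nonneg ((m : ℝ) * n), sq_nonneg ((m : ℝ) - n)]
end
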